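/- arXiv:2209.10142 — 3 statements merged into one kernel-verified Lean document; each statement's English description precedes it below -/
import Mathlib

section
/- Under the stated setup, δ₁ = S₁((r₁, r₂, r₃); λ) − S₁((r₁−1, r₂, r₃+1); λ') satisfies δ₁ ≥ −2^{r₂+r₃+2} + 2^{r₃+1}. -/
open Finset

/-- The fundamental Lagrange interpolation polynomial value `l_i(μ)` for
equally spaced nodes of the triangle, degree `n`. -/
noncomputable def lagPoly (n : ℕ) (mu : ℝ × ℝ × ℝ) (i : ℕ × ℕ × ℕ) : ℝ :=
  (Real.Gamma (n * mu.1 + 1) / (i.1.factorial * Real.Gamma (n * mu.1 - i.1 + 1))) *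
  (Real.Gamma (n * mu.2.1 + 1) / (i.2.1.factorial * Real.Gamma (n * mu.2.1 - i.2.1 + 1))) *
  (Real.Gamma (n * mu.2.2 + 1) / (i.2.2.factorial * Real.Gamma (n * mu.2.2 - i.2.2 + 1)))

/-- `S₁((ρ₁,ρ₂,ρ₃); μ) = Σ_{i₂=0}^{ρ₂} Σ_{i₃=0}^{ρ₃} |l_{(n−i₂−i₃, i₂, i₃)}(μ)|`. -/
noncomputable def S1 (n : ℕ) (ρ : ℕ × ℕ × ℕ) (mu : ℝ × ℝ × ℝ) : ℝ :=
  ∑ i₂ ∈ Finset.range (ρ.2.1 + 1), ∑ i₃ ∈ Finset.range (ρ.2.2 + 1),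
    |lagPoly n mu (n - i₂ - i₃, i₂, i₃)|

noncomputable def Pp (x : ℝ) (i : ℕ) : ℝ := ∏ j ∈ Finset.range i, (x - j)

lemma Pp_succ (x : ℝ) (i : ℕ) : Pp x (i+1) = Pp x i * (x - i) := Finset.prod_range_succ _ _

lemma Pp_shift (x : ℝ) (i : ℕ) : Pp (x+1) (i+1) = (x + 1) * Pp x i := by
  rw [Pp, Finset.prod_range_succ']
  rw [mul_comm]
  congr 1
  · norm_num
  · apply Finset.prod_congr rfl; intro j _; push_cast; ring

lemma Pp_nonneg {x : ℝ} {i : ℕ} (h : (i:ℝ) - 1 ≤ x) : 0 ≤ Pp x i := by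
  apply Finset.prod_nonneg
  intro j hj
  have hj' : (j:ℝ) + 1 ≤ i := by exact_mod_cast Finset.mem_range.mp hj
  linarith

lemma gamma_prod (x : ℝ) :
    ∀ i : ℕ, Real.Gamma (x - i + 1) ≠ 0 →
      Real.Gamma (x + 1) = Pp x i * Real.Gamma (x - i + 1) := by
  intro i
  induction i with
  | zero => intro _; simp [Pp]
  | succ i ih =>
    intro h
    have hcast : x - ((i:ℕ)+1:ℕ) + 1 = x - i := by push_cast; ring
    rw [hcast] at h
    have hne : x - i ≠ 0 := by
      intro h0; rw [h0] at h; exact h Real.Gamma_zero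
    have key : Real.Gamma (x - i + 1) = (x - i) * Real.Gamma (x - i) :=
      Real.Gamma_add_one hne
    have h1 : Real.Gamma (x - i + 1) ≠ 0 := by
      rw [key]; exact mul_ne_zero hne h
    rw [ih h1, key, hcast, Pp_succ]; ring

lemma abs_ratio_le (x : ℝ) (hx : 0 ≤ x) (i : ℕ) :
    |Real.Gamma (x + 1) / (i.factorial * Real.Gamma (x - i + 1))| ≤
      |Pp x i| / i.factorial := by
  by_cases h : Real.Gamma (x - i + 1) = 0
  · obtain ⟨m, hm⟩ := (Real.Gamma_eq_zero_iff _).mp h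
    have him : m + 1 ≤ i := by
      by_contra hc
      push_neg at hc
      have : (i:ℝ) ≤ m := by exact_mod_cast Nat.lt_succ_iff.mp hc
      nlinarith
    have hk : (i - 1 - m) + m + 1 = i := by omega
    have hkc : ((i - 1 - m : ℕ) : ℝ) = (i:ℝ) - 1 - m := by
      have := congrArg (fun t : ℕ => (t : ℝ)) hk
      push_cast at this
      linarith
    have hzero : Pp x i = 0 := by
      apply Finset.prod_eq_zero (Finset.mem_range.mpr (show i - 1 - m < i by omega))
      rw [hkc]
      nlinarith
    rw [h, mul_zero, div_zero, abs_zero, hzero, abs_zero, zero_div]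
  · rw [gamma_prod x i h]
    have hfac : (i.factorial : ℝ) ≠ 0 := by positivity
    have : Pp x i * Real.Gamma (x - i + 1) / (i.factorial * Real.Gamma (x - i + 1))
        = Pp x i / i.factorial := by
      field_simp
    rw [this, abs_div, abs_of_nonneg (show (0:ℝ) ≤ (i.factorial:ℝ) by positivity)]

lemma sum_c_le (α : ℝ) (h0 : 0 ≤ α) (h1 : α ≤ 1) :
    ∀ m : ℕ, ∑ i ∈ range (m+2), Pp ((m:ℝ) + α) i / i.factorial ≤ 2 ^ m * (1 + α) := by
  intro m
  induction m with
  | zero =>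
    rw [Finset.sum_range_succ, Finset.sum_range_one]
    simp [Pp, Nat.factorial]
  | succ m ih =>
    set x : ℝ := (m:ℝ) + α with hxdef
    have hx1 : ((m:ℝ) + 1 + α) = x + 1 := by ring
    have hterm : ∀ i : ℕ, Pp (x+1) (i+1) / (i+1).factorial
        = Pp x (i+1) / (i+1).factorial + Pp x i / i.factorial := by
      intro i
      have hf : ((i+1).factorial : ℝ) = ((i:ℝ)+1) * i.factorial := by
        rw [Nat.factorial_succ]; push_cast; ring
      have hfne : (i.factorial : ℝ) ≠ 0 := by positivity
      rw [Pp_shift, Pp_succ, hf]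
      field_simp
      ring
    have step1 : ∑ i ∈ range (m+3), Pp (x+1) i / i.factorial
        = ∑ i ∈ range (m+2), Pp (x+1) (i+1) / (i+1).factorial + 1 := by
      rw [Finset.sum_range_succ']
      simp [Pp]
    have step2 : ∑ i ∈ range (m+2), Pp x (i+1) / (i+1).factorial
        = ∑ i ∈ range (m+2), Pp x i / i.factorial + Pp x (m+2) / (m+2).factorial - 1 := by
      have := Finset.sum_range_succ' (fun i => Pp x i / i.factorial) (m+2)
      have h2 := Finset.sum_range_succ (fun i => Pp x i / i.factorial) (m+2)
      simp only [Pp] at this h2 ⊢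
      simp at this
      rw [h2] at this
      linarith [this]
    have hlast : Pp x (m+2) / (m+2).factorial ≤ 0 := by
      apply div_nonpos_of_nonpos_of_nonneg
      · rw [Pp_succ]
        have h1' : 0 ≤ Pp x (m+1) := Pp_nonneg (by push_cast; linarith)
        have h2' : x - (m+1:ℕ) ≤ 0 := by push_cast; linarith
        exact mul_nonpos_of_nonneg_of_nonpos h1' h2'
      · positivity
    calc ∑ i ∈ range (m+1+2), Pp (((m+1:ℕ):ℝ)+α) i / i.factorial
        = ∑ i ∈ range (m+3), Pp (x+1) i / i.factorial := by
          push_cast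
          rw [hx1]
      _ = ∑ i ∈ range (m+2), (Pp x (i+1) / (i+1).factorial + Pp x i / i.factorial) + 1 := by
          rw [step1]; congr 1; apply Finset.sum_congr rfl; intro i _; exact hterm i
      _ = (∑ i ∈ range (m+2), Pp x (i+1) / (i+1).factorial)
            + (∑ i ∈ range (m+2), Pp x i / i.factorial) + 1 := by
          rw [Finset.sum_add_distrib]
      _ = 2 * (∑ i ∈ range (m+2), Pp x i / i.factorial) + Pp x (m+2) / (m+2).factorial := by
          rw [step2]; ring
      _ ≤ 2 * (2 ^ m * (1 + α)) + 0 := by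
          linarith [ih, hlast]
      _ = 2 ^ (m+1) * (1 + α) := by ring

lemma Pp_le_pos (α : ℝ) (h0 : 0 ≤ α) (h1 : α ≤ 1) :
    ∀ k : ℕ, Pp ((k:ℝ) + α) k ≤ (k+1).factorial := by
  intro k
  induction k with
  | zero => simp [Pp, Nat.factorial]
  | succ k ih =>
    have hx1 : ((k:ℝ) + 1 + α) = ((k:ℝ) + α) + 1 := by ring
    have hnn : 0 ≤ Pp ((k:ℝ) + α) k := Pp_nonneg (by linarith)
    have hfc : (((k+2):ℕ).factorial : ℝ) = ((k:ℝ)+2) * ((k+1).factorial : ℝ) := by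
      rw [show k+2 = (k+1)+1 by ring, Nat.factorial_succ]; push_cast; ring
    calc Pp (((k+1:ℕ):ℝ) + α) (k+1) = (((k:ℝ) + α) + 1) * Pp ((k:ℝ) + α) k := by
          push_cast; rw [hx1, Pp_shift]
      _ ≤ ((k:ℝ)+2) * ((k+1).factorial : ℝ) := by
          apply mul_le_mul (by linarith) ih hnn (by linarith)
      _ = ((k+2).factorial : ℝ) := hfc.symm

lemma Pp_le_neg (α : ℝ) (h0 : -1 ≤ α) (h1 : α ≤ 0) :
    ∀ k : ℕ, 1 ≤ k → Pp ((k:ℝ) + α) k ≤ (1 + α) * k.factorial := by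
  intro k hk
  induction k, hk using Nat.le_induction with
  | base => simp [Pp, Nat.factorial]
  | succ k hk ih =>
    have hx1 : ((k:ℝ) + 1 + α) = ((k:ℝ) + α) + 1 := by ring
    have hnn : 0 ≤ Pp ((k:ℝ) + α) k := Pp_nonneg (by linarith)
    have hfc : (((k+1):ℕ).factorial : ℝ) = ((k:ℝ)+1) * (k.factorial : ℝ) := by
      rw [Nat.factorial_succ]; push_cast; ring
    have hfnn : (0:ℝ) ≤ k.factorial := by positivity
    calc Pp (((k+1:ℕ):ℝ) + α) (k+1) = (((k:ℝ) + α) + 1) * Pp ((k:ℝ) + α) k := by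
          push_cast; rw [hx1, Pp_shift]
      _ ≤ ((k:ℝ)+1) * ((1 + α) * k.factorial) := by
          apply mul_le_mul (by linarith) ih hnn (by linarith)
      _ = (1 + α) * (((k+1):ℕ).factorial : ℝ) := by rw [hfc]; ring

lemma abs_Pp_div_anti (x : ℝ) (hx : -1 ≤ x) (r : ℕ) (hxr : x ≤ r) :
    ∀ i, r ≤ i → |Pp x i| / i.factorial ≤ |Pp x r| / r.factorial := by
  intro i hi
  induction i, hi using Nat.le_induction with
  | base => exact le_refl _
  | succ i hi ih =>
    have hri : (r:ℝ) ≤ i := by exact_mod_cast hi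
    have habs : |x - (i:ℝ)| ≤ (i:ℝ) + 1 := by
      rw [abs_le]; constructor <;> nlinarith
    have hfc : (((i+1):ℕ).factorial : ℝ) = ((i:ℝ)+1) * (i.factorial : ℝ) := by
      rw [Nat.factorial_succ]; push_cast; ring
    have hfne : (0:ℝ) < i.factorial := by positivity
    calc |Pp x (i+1)| / ((i+1).factorial : ℝ)
        = (|Pp x i| * |x - i|) / (((i:ℝ)+1) * i.factorial) := by
          rw [Pp_succ, abs_mul, hfc]
      _ ≤ (|Pp x i| * ((i:ℝ)+1)) / (((i:ℝ)+1) * i.factorial) := by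
          gcongr
      _ = |Pp x i| / i.factorial := by
          field_simp
      _ ≤ |Pp x r| / r.factorial := ih

lemma term_bound1 (x : ℝ) (hx0 : 0 ≤ x) (r i : ℕ) (hri : r ≤ i) (hxr : x ≤ r) :
    |Real.Gamma (x + 1) / (i.factorial * Real.Gamma (x - i + 1))| ≤
      |Pp x r| / r.factorial :=
  (abs_ratio_le x hx0 i).trans (abs_Pp_div_anti x (by linarith) r hxr i hri)

lemma term_bound2 (x : ℝ) (hx0 : 0 ≤ x) (i : ℕ) (hxi : (i:ℝ) - 1 ≤ x) :
    |Real.Gamma (x + 1) / (i.factorial * Real.Gamma (x - i + 1))| ≤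
      Pp x i / i.factorial := by
  have := abs_ratio_le x hx0 i
  rwa [abs_of_nonneg (Pp_nonneg hxi)] at this

lemma K_bound (r₁ : ℕ) (hr1 : 2 ≤ r₁) (α₁ α₂ α₃ : ℝ)
    (hα₁ : -1 < α₁) (hα₁' : α₁ < 1)
    (hα₂ : 0 ≤ α₂) (hα₂' : α₂ < 1) (hα₃ : 0 ≤ α₃) (hα₃' : α₃ < 1)
    (hs : α₁ + α₂ + α₃ = 1) :
    |Pp ((r₁:ℝ) - 1 + α₁) r₁| / r₁.factorial * ((1 + α₂) * (1 + α₃)) ≤ 1 := by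
  obtain ⟨k, hk⟩ : ∃ k, r₁ = k + 1 := ⟨r₁ - 1, by omega⟩
  have hk1 : 1 ≤ k := by omega
  have hk1R : (1:ℝ) ≤ k := by exact_mod_cast hk1
  have hx1k' : (r₁:ℝ) - 1 + α₁ = (k:ℝ) + α₁ := by rw [hk]; push_cast; ring
  have hPnn : 0 ≤ Pp ((k:ℝ) + α₁) k := Pp_nonneg (by linarith)
  have hPsplit : |Pp ((r₁:ℝ) - 1 + α₁) r₁| = Pp ((k:ℝ) + α₁) k * |α₁| := by
    rw [hx1k', hk, Pp_succ, abs_mul, abs_of_nonneg hPnn]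
    have hkk : (k:ℝ) + α₁ - k = α₁ := by ring
    rw [hkk]
  have hfact : (r₁.factorial : ℝ) = ((k+1).factorial : ℝ) := by rw [hk]
  have hfc : (((k+1):ℕ).factorial : ℝ) = ((k:ℝ)+1) * (k.factorial : ℝ) := by
    rw [Nat.factorial_succ]; push_cast; ring
  have hfpos : (0:ℝ) < (k+1).factorial := by positivity
  have hfkpos : (0:ℝ) < k.factorial := by positivity
  set K : ℝ := |Pp ((r₁:ℝ) - 1 + α₁) r₁| / r₁.factorial with hKdef
  rcases le_or_gt 0 α₁ with hpos | hneg
  · have hle : Pp ((k:ℝ) + α₁) k ≤ ((k+1).factorial : ℝ) :=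
      Pp_le_pos α₁ hpos (le_of_lt hα₁') k
    have hKle : K ≤ α₁ := by
      rw [hKdef, hPsplit, hfact, abs_of_nonneg hpos, div_le_iff₀ hfpos]
      linarith [mul_le_mul_of_nonneg_right hle hpos]
    have hmul0 : (0:ℝ) ≤ (1 + α₂) * (1 + α₃) :=
      mul_nonneg (by linarith) (by linarith)
    have hstep2 : α₁ * ((1 + α₂) * (1 + α₃)) ≤ 1 := by
      nlinarith [sq_nonneg (α₂ - α₃), mul_nonneg hα₂ hα₃,
        mul_nonneg (mul_nonneg hα₂ hα₃) (add_nonneg hα₂ hα₃)]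
    have := mul_le_mul_of_nonneg_right hKle hmul0
    linarith
  · have hle : Pp ((k:ℝ) + α₁) k ≤ (1 + α₁) * k.factorial :=
      Pp_le_neg α₁ (le_of_lt hα₁) (le_of_lt hneg) k hk1
    have h4 : (1 + α₁) * (-α₁) ≤ 1/4 := by nlinarith [sq_nonneg (1 + 2*α₁)]
    have hKle : K ≤ 1/8 := by
      rw [hKdef, hPsplit, hfact, abs_of_neg hneg, hfc, div_le_iff₀ (by positivity)]
      have hstep : Pp ((k:ℝ) + α₁) k * (-α₁) ≤ ((1 + α₁) * (-α₁)) * k.factorial := by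
        have := mul_le_mul_of_nonneg_right hle (by linarith : (0:ℝ) ≤ -α₁)
        linarith [this]
      have hh1 := mul_le_mul_of_nonneg_right h4 (le_of_lt hfkpos)
      have hh2 := mul_le_mul_of_nonneg_right
        (show (2:ℝ) ≤ (k:ℝ) + 1 by linarith) (le_of_lt hfkpos)
      linarith [hstep, hh1, hh2]
    have h44 : (1 + α₂) * (1 + α₃) ≤ 4 := by nlinarith
    have hmul0 : (0:ℝ) ≤ (1 + α₂) * (1 + α₃) :=
      mul_nonneg (by linarith) (by linarith)
    have hK0 : 0 ≤ K := by positivity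
    have := mul_le_mul hKle h44 hmul0 (by norm_num : (0:ℝ) ≤ 1/8)
    linarith

lemma S1_second_bound (n : ℕ) (hn : 4 ≤ n) (r₁ r₂ r₃ : ℕ)
    (hr : r₁ + r₂ + r₃ = n - 1) (α₁ α₂ α₃ : ℝ)
    (hα₁ : -1 < α₁) (hα₁' : α₁ < 1)
    (hα₂ : 0 ≤ α₂) (hα₂' : α₂ < 1) (hα₃ : 0 ≤ α₃) (hα₃' : α₃ < 1)
    (hs : α₁ + α₂ + α₃ = 1) (hr13 : r₃ + 2 ≤ r₁) :
    S1 n (r₁ - 1, r₂, r₃ + 1)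
        (((r₁:ℝ) - 1 + α₁)/n, ((r₂:ℝ) + α₂)/n, ((r₃:ℝ) + 1 + α₃)/n)
      ≤ 2 ^ (r₂ + r₃ + 1) := by
  have hn0 : (n:ℝ) ≠ 0 := Nat.cast_ne_zero.mpr (by omega)
  have hr1 : 2 ≤ r₁ := by omega
  have hr1R : (2:ℝ) ≤ r₁ := by exact_mod_cast hr1
  have hx₁0 : (0:ℝ) ≤ (r₁:ℝ) - 1 + α₁ := by linarith
  have hx₁r : (r₁:ℝ) - 1 + α₁ ≤ (r₁:ℝ) := by linarith
  set K : ℝ := |Pp ((r₁:ℝ) - 1 + α₁) r₁| / r₁.factorial with hKdef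
  have hK0 : 0 ≤ K := by positivity
  have hK : K * ((1 + α₂) * (1 + α₃)) ≤ 1 :=
    K_bound r₁ hr1 α₁ α₂ α₃ hα₁ hα₁' hα₂ hα₂' hα₃ hα₃' hs
  have e₁ : (n:ℝ) * (((r₁:ℝ) - 1 + α₁)/n) = (r₁:ℝ) - 1 + α₁ := by field_simp
  have e₂ : (n:ℝ) * (((r₂:ℝ) + α₂)/n) = (r₂:ℝ) + α₂ := by field_simp
  have e₃ : (n:ℝ) * (((r₃:ℝ) + 1 + α₃)/n) = (r₃:ℝ) + 1 + α₃ := by field_simp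
  have hB : ∑ i ∈ range (r₂+1), Pp ((r₂:ℝ) + α₂) i / i.factorial ≤ 2 ^ r₂ * (1 + α₂) := by
    have h1 := sum_c_le α₂ hα₂ (le_of_lt hα₂') r₂
    have h2 := Finset.sum_range_succ (fun i => Pp ((r₂:ℝ) + α₂) i / i.factorial) (r₂+1)
    have h3 : 0 ≤ Pp ((r₂:ℝ) + α₂) (r₂+1) / ((r₂+1).factorial : ℝ) := by
      apply div_nonneg (Pp_nonneg (by push_cast; linarith)) (by positivity)
    rw [show r₂ + 1 + 1 = r₂ + 2 by ring] at h2
    rw [h2] at h1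
    linarith
  have hC : ∑ i ∈ range (r₃+2), Pp ((r₃:ℝ) + 1 + α₃) i / i.factorial
      ≤ 2 ^ (r₃+1) * (1 + α₃) := by
    have h1 := sum_c_le α₃ hα₃ (le_of_lt hα₃') (r₃+1)
    push_cast at h1
    have h2 := Finset.sum_range_succ (fun i => Pp ((r₃:ℝ) + 1 + α₃) i / i.factorial) (r₃+2)
    have h3 : 0 ≤ Pp ((r₃:ℝ) + 1 + α₃) (r₃+2) / ((r₃+2).factorial : ℝ) := by
      apply div_nonneg (Pp_nonneg (by push_cast; linarith)) (by positivity)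
    rw [show r₃ + 1 + 2 = r₃ + 2 + 1 by ring] at h1
    rw [h2] at h1
    linarith
  have hBnn : 0 ≤ ∑ i ∈ range (r₂+1), Pp ((r₂:ℝ) + α₂) i / i.factorial := by
    apply Finset.sum_nonneg; intro i hi
    have hi' : i ≤ r₂ := by have := Finset.mem_range.mp hi; omega
    have : (i:ℝ) ≤ r₂ := by exact_mod_cast hi'
    exact div_nonneg (Pp_nonneg (by linarith)) (by positivity)
  have hCnn : 0 ≤ ∑ i ∈ range (r₃+2), Pp ((r₃:ℝ) + 1 + α₃) i / i.factorial := by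
    apply Finset.sum_nonneg; intro i hi
    have hi' : i ≤ r₃ + 1 := by have := Finset.mem_range.mp hi; omega
    have : (i:ℝ) ≤ (r₃:ℝ) + 1 := by exact_mod_cast hi'
    exact div_nonneg (Pp_nonneg (by linarith)) (by positivity)
  rw [S1]
  simp only [lagPoly, e₁, e₂, e₃]
  calc ∑ i₂ ∈ range (r₂+1), ∑ i₃ ∈ range (r₃+1+1),
        |Real.Gamma ((r₁:ℝ) - 1 + α₁ + 1) /
            ((n - i₂ - i₃).factorial * Real.Gamma ((r₁:ℝ) - 1 + α₁ - ((n - i₂ - i₃ : ℕ) : ℝ) + 1)) *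
          (Real.Gamma ((r₂:ℝ) + α₂ + 1) /
            (i₂.factorial * Real.Gamma ((r₂:ℝ) + α₂ - i₂ + 1))) *
          (Real.Gamma ((r₃:ℝ) + 1 + α₃ + 1) /
            (i₃.factorial * Real.Gamma ((r₃:ℝ) + 1 + α₃ - i₃ + 1)))|
      ≤ ∑ i₂ ∈ range (r₂+1), ∑ i₃ ∈ range (r₃+2),
          K * (Pp ((r₂:ℝ) + α₂) i₂ / i₂.factorial)
            * (Pp ((r₃:ℝ) + 1 + α₃) i₃ / i₃.factorial) := by
        apply Finset.sum_le_sum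
        intro i₂ hi₂
        apply Finset.sum_le_sum
        intro i₃ hi₃
        have hi₂' : i₂ ≤ r₂ := by have := Finset.mem_range.mp hi₂; omega
        have hi₃' : i₃ ≤ r₃ + 1 := by have := Finset.mem_range.mp hi₃; omega
        have hi₂R : (i₂:ℝ) ≤ r₂ := by exact_mod_cast hi₂'
        have hi₃R : (i₃:ℝ) ≤ (r₃:ℝ) + 1 := by
          have : (i₃:ℝ) ≤ ((r₃+1:ℕ):ℝ) := by exact_mod_cast hi₃'
          push_cast at this; linarith
        have hri : r₁ ≤ n - i₂ - i₃ := by omega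
        rw [abs_mul, abs_mul]
        have hA' := term_bound1 ((r₁:ℝ) - 1 + α₁) hx₁0 r₁ (n - i₂ - i₃) hri hx₁r
        have hA : |Real.Gamma ((r₁:ℝ) - 1 + α₁ + 1) /
            ((n - i₂ - i₃).factorial *
              Real.Gamma ((r₁:ℝ) - 1 + α₁ - ((n - i₂ - i₃ : ℕ) : ℝ) + 1))| ≤ K := by
          rw [hKdef]; exact hA'

        have hBt := term_bound2 ((r₂:ℝ) + α₂) (by linarith) i₂ (by linarith)
        have hCt := term_bound2 ((r₃:ℝ) + 1 + α₃) (by linarith) i₃ (by linarith)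
        have hb2 : 0 ≤ Pp ((r₂:ℝ) + α₂) i₂ / i₂.factorial :=
          div_nonneg (Pp_nonneg (by linarith)) (by positivity)
        exact mul_le_mul (mul_le_mul hA hBt (abs_nonneg _) hK0) hCt (abs_nonneg _)
          (mul_nonneg hK0 hb2)
    _ = ∑ i₂ ∈ range (r₂+1), (K * (Pp ((r₂:ℝ) + α₂) i₂ / i₂.factorial))
          * (∑ i₃ ∈ range (r₃+2), Pp ((r₃:ℝ) + 1 + α₃) i₃ / i₃.factorial) := by
        apply Finset.sum_congr rfl
        intro i₂ _
        rw [Finset.mul_sum]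
    _ = K * (∑ i₂ ∈ range (r₂+1), Pp ((r₂:ℝ) + α₂) i₂ / i₂.factorial)
          * (∑ i₃ ∈ range (r₃+2), Pp ((r₃:ℝ) + 1 + α₃) i₃ / i₃.factorial) := by
        rw [← Finset.sum_mul, ← Finset.mul_sum]
    _ ≤ (K * (2 ^ r₂ * (1 + α₂))) * (2 ^ (r₃+1) * (1 + α₃)) := by
        apply mul_le_mul (mul_le_mul_of_nonneg_left hB hK0) hC hCnn
        exact mul_nonneg hK0 (by positivity)
    _ = (K * ((1 + α₂) * (1 + α₃))) * (2 ^ r₂ * 2 ^ (r₃+1)) := by ring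
    _ ≤ 1 * (2 ^ r₂ * 2 ^ (r₃+1)) := by
        apply mul_le_mul_of_nonneg_right hK (by positivity)
    _ = 2 ^ (r₂ + r₃ + 1) := by
        rw [one_mul]; ring
theorem delta1_lower_bound (n : ℕ) (hn : 4 ≤ n) (r₁ r₂ r₃ : ℕ)
    (hr : r₁ + r₂ + r₃ = n - 1) (α₁ α₂ α₃ : ℝ)
    (hα₁ : -1 < α₁) (hα₁' : α₁ < 1)
    (hα₂ : 0 ≤ α₂) (hα₂' : α₂ < 1) (hα₃ : 0 ≤ α₃) (hα₃' : α₃ < 1)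
    (hs : α₁ + α₂ + α₃ = 1)
    (h12 : (r₁:ℝ) - 1 + α₁ ≥ (r₂:ℝ) + α₂) (h13 : (r₁:ℝ) - 1 + α₁ ≥ (r₃:ℝ) + 1 + α₃) :
    S1 n (r₁, r₂, r₃) (((r₁:ℝ) + α₁)/n, ((r₂:ℝ) + α₂)/n, ((r₃:ℝ) + α₃)/n)
      - S1 n (r₁ - 1, r₂, r₃ + 1)
          (((r₁:ℝ) - 1 + α₁)/n, ((r₂:ℝ) + α₂)/n, ((r₃:ℝ) + 1 + α₃)/n)
      ≥ -(2:ℝ) ^ (r₂ + r₃ + 2) + 2 ^ (r₃ + 1) := by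
  have hn0 : (n:ℝ) ≠ 0 := Nat.cast_ne_zero.mpr (by omega)
  have hr13 : r₃ + 2 ≤ r₁ := by
    have h1 : (r₃:ℝ) + 1 < r₁ := by linarith
    have h2 : r₃ + 1 < r₁ := by exact_mod_cast h1
    omega
  have hS1 : 0 ≤ S1 n (r₁, r₂, r₃) (((r₁:ℝ) + α₁)/n, ((r₂:ℝ) + α₂)/n, ((r₃:ℝ) + α₃)/n) := by
    apply Finset.sum_nonneg; intro _ _
    exact Finset.sum_nonneg fun _ _ => abs_nonneg _
  have hS2 := S1_second_bound n hn r₁ r₂ r₃ hr α₁ α₂ α₃ hα₁ hα₁' hα₂ hα₂' hα₃ hα₃' hs hr13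
  have hp1 : (2:ℝ) ^ (r₂ + r₃ + 2) = 2 * 2 ^ (r₂ + r₃ + 1) := by
    rw [pow_succ]; ring
  have hp2 : (2:ℝ) ^ (r₃ + 1) ≤ 2 ^ (r₂ + r₃ + 1) := by
    apply pow_le_pow_right₀ (by norm_num) (by omega)
  linarith
end

section
/- Under the stated setup, δ₃ = S₃((r₁, r₂, r₃); λ) − S₃((r₁−1, r₂, r₃+1); λ') satisfies δ₃ ≥ −2^{r₂−1}/r₁. -/
open Finset

/-- `S₃((ρ₁,ρ₂,ρ₃); μ) = Σ_{i₂=0}^{ρ₂} Σ_{i₁=0}^{ρ₁} |l_{(i₁, i₂, n−i₁−i₂)}(μ)|`. -/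
noncomputable def S3 (n : ℕ) (ρ : ℕ × ℕ × ℕ) (mu : ℝ × ℝ × ℝ) : ℝ :=
  ∑ i₂ ∈ Finset.range (ρ.2.1 + 1), ∑ i₁ ∈ Finset.range (ρ.1 + 1),
    |lagPoly n mu (i₁, i₂, n - i₁ - i₂)|

set_option maxHeartbeats 1000000

section Delta3Helpers

noncomputable def Fg (x : ℝ) (i : ℕ) : ℝ :=
  Real.Gamma (x + 1) / (i.factorial * Real.Gamma (x - i + 1))


lemma gamma_prod_s9 (b : ℝ) (hb : 0 < b) (j : ℕ) :
    Real.Gamma (b + j) = (∏ k ∈ range j, (b + k)) * Real.Gamma b := by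
  induction j with
  | zero => simp
  | succ j ih =>
    have h : b + ((j : ℝ) + 1) = (b + j) + 1 := by ring
    have hne : b + (j : ℝ) ≠ 0 := by positivity
    push_cast
    rw [h, Real.Gamma_add_one hne, ih, prod_range_succ]
    push_cast
    ring

lemma F_base (b : ℝ) (hb : 0 < b + 1) (j : ℕ) :
    Fg (b + j) j = (∏ k ∈ range j, (b + 1 + k)) / (j.factorial : ℝ) := by
  unfold Fg
  have h1 : b + (j : ℝ) + 1 = (b + 1) + j := by ring
  have h2 : b + (j : ℝ) - j + 1 = b + 1 := by ring
  rw [h1, h2, gamma_prod_s9 (b + 1) hb j]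
  have hG := Real.Gamma_pos_of_pos hb
  rw [mul_div_assoc]
  congr 1
  field_simp

lemma F_pred (x : ℝ) (i : ℕ) (hx : x ≠ 0) (hxi : x - i ≠ 0)
    (hG : Real.Gamma (x - i) ≠ 0) :
    Fg (x - 1) i = Fg x i * ((x - i) / x) := by
  unfold Fg
  have h1 : x - 1 + 1 = x := by ring
  have h2 : x - 1 - i + 1 = x - i := by ring
  rw [h1, h2, Real.Gamma_add_one hxi, Real.Gamma_add_one hx]
  have hf : (i.factorial : ℝ) ≠ 0 := by positivity
  field_simp

lemma F_succ (x : ℝ) (i : ℕ) (hx : x ≠ 0) :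
    Fg x (i + 1) = Fg (x - 1) i * (x / (i + 1)) := by
  unfold Fg
  have h2 : x - ((i : ℝ) + 1) + 1 = x - 1 - i + 1 := by ring
  push_cast
  rw [h2, Real.Gamma_add_one hx, Nat.factorial_succ]
  rcases eq_or_ne (Real.Gamma (x - 1 - i + 1)) 0 with h | h
  · simp [h]
  · have hf : (i.factorial : ℝ) ≠ 0 := by positivity
    push_cast
    field_simp
    ring

lemma prod_range_cast_fact (j : ℕ) : (∏ k ∈ range j, ((k : ℝ) + 1)) = (j.factorial : ℝ) := by
  induction j with
  | zero => simp
  | succ j ih => rw [prod_range_succ, ih, Nat.factorial_succ]; push_cast; ring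

lemma prod_range_cast_fact2 (j : ℕ) :
    (∏ k ∈ range j, ((k : ℝ) + 2)) = ((j + 1).factorial : ℝ) := by
  induction j with
  | zero => simp
  | succ j ih =>
    rw [prod_range_succ, ih, Nat.factorial_succ (j+1)]
    push_cast; ring

lemma prod_le_fact (c : ℝ) (h0 : 0 ≤ c) (h1 : c ≤ 1) (j : ℕ) :
    (∏ k ∈ range j, (c + 1 + k)) ≤ ((j + 1).factorial : ℝ) := by
  calc (∏ k ∈ range j, (c + 1 + k)) ≤ ∏ k ∈ range j, ((k : ℝ) + 2) := by
        apply Finset.prod_le_prod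
        · intro k _; positivity
        · intro k _; linarith
    _ = ((j + 1).factorial : ℝ) := prod_range_cast_fact2 j

lemma termA (x y w : ℝ) (i₁ i₂ i₃ : ℕ) (hx : 0 < x) (hy1 : 0 < y + 1)
    (hxi : 0 < x - i₁) (hi₃ : y + 2 ≤ (i₃ : ℝ))
    (hGy : Real.Gamma (y + 1 - i₃) ≠ 0)
    (hineq : (x - i₁) * (y + 1) ≤ x * ((i₃ : ℝ) - 1 - y)) :
    |Fg (x - 1) i₁ * Fg w i₂ * Fg (y + 1) i₃| ≤ |Fg x i₁ * Fg w i₂ * Fg y i₃| := by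
  have hGx : Real.Gamma (x - i₁) ≠ 0 := (Real.Gamma_pos_of_pos hxi).ne'
  have e1 := F_pred x i₁ hx.ne' hxi.ne' hGx
  have hyi : y + 1 - i₃ ≠ 0 := by linarith
  have e3 : Fg y i₃ = Fg (y + 1) i₃ * ((y + 1 - i₃) / (y + 1)) := by
    have := F_pred (y + 1) i₃ hy1.ne' hyi hGy
    simpa [show y + 1 - 1 = y by ring] using this
  rw [e1, e3]
  have h1 : |Fg x i₁ * ((x - ↑i₁) / x) * Fg w i₂ * Fg (y + 1) i₃|
      = |Fg x i₁ * Fg w i₂ * Fg (y + 1) i₃| * ((x - i₁) / x) := by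
    simp only [abs_mul, abs_div, abs_of_pos hx, abs_of_pos hxi]
    ring
  have h2 : |Fg x i₁ * Fg w i₂ * (Fg (y + 1) i₃ * ((y + 1 - ↑i₃) / (y + 1)))|
      = |Fg x i₁ * Fg w i₂ * Fg (y + 1) i₃| * (((i₃ : ℝ) - 1 - y) / (y + 1)) := by
    have hneg : y + 1 - (i₃ : ℝ) < 0 := by linarith
    simp only [abs_mul, abs_div, abs_of_pos hy1, abs_of_neg hneg]
    ring
  rw [h1, h2]
  apply mul_le_mul_of_nonneg_left _ (abs_nonneg _)
  rw [div_le_div_iff₀ hx hy1]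
  linarith

lemma termB (x y w : ℝ) (i₁ j i₂ : ℕ) (hx : 0 < x) (hy1 : 0 < y + 1)
    (hineq : ((i₁ : ℝ) + 1) * (y + 1) ≤ x * ((j : ℝ) + 1)) :
    |Fg (x - 1) i₁ * Fg w i₂ * Fg (y + 1) (j + 1)| ≤ |Fg x (i₁ + 1) * Fg w i₂ * Fg y j| := by
  have e1 := F_succ x i₁ hx.ne'
  have e3 : Fg (y + 1) (j + 1) = Fg y j * ((y + 1) / (j + 1)) := by
    have := F_succ (y + 1) j hy1.ne'
    simpa [show y + 1 - 1 = y by ring] using this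
  rw [e1, e3]
  have hj1 : (0 : ℝ) < (j : ℝ) + 1 := by positivity
  have hi1 : (0 : ℝ) < (i₁ : ℝ) + 1 := by positivity
  have h1 : |Fg (x - 1) i₁ * Fg w i₂ * (Fg y j * ((y + 1) / (j + 1)))|
      = |Fg (x - 1) i₁ * Fg w i₂ * Fg y j| * ((y + 1) / (j + 1)) := by
    simp only [abs_mul, abs_div, abs_of_pos hy1, abs_of_pos hj1]
    ring
  have h2 : |Fg (x - 1) i₁ * (x / (↑i₁ + 1)) * Fg w i₂ * Fg y j|
      = |Fg (x - 1) i₁ * Fg w i₂ * Fg y j| * (x / (i₁ + 1)) := by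
    simp only [abs_mul, abs_div, abs_of_pos hx, abs_of_pos hi1]
    ring
  rw [h1, h2]
  apply mul_le_mul_of_nonneg_left _ (abs_nonneg _)
  rw [div_le_div_iff₀ hj1 hi1]
  linarith

lemma arith_neg (R T a1 a3 : ℝ) (hR : 0 < R) (h3 : a3 < 1) (hT : 0 ≤ T)
    (hbad : (R + a1) * (T + 2) < R * (T + 1 + a3)) : a1 < 0 := by nlinarith

lemma arith_Mle (R T a1 a3 : ℝ) (h13 : T + 2 ≤ R) (h3 : a3 ≤ 1) :
    R * (T + 1 + a3) - (R + a1) * (T + 2) ≤ (T + 2) * (a3 - 1 - a1) := by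
  nlinarith [mul_nonneg (sub_nonneg.2 h13) (sub_nonneg.2 h3)]

lemma arith_amgm (a1 a3 : ℝ) : (a1 + 1) * (a3 - 1 - a1) ≤ a3 ^ 2 / 4 := by
  nlinarith [sq_nonneg (2 + 2 * a1 - a3)]

lemma arith_cube (a : ℝ) (h0 : 0 ≤ a) (h1 : a ≤ 1) : a ^ 3 ≤ 1 := by
  calc a ^ 3 = a * a * a := by ring
    _ ≤ 1 := by nlinarith

lemma arith_q2 (a3 T : ℝ) (h0 : 0 ≤ a3) (h1 : a3 ≤ 1) (hT : 0 ≤ T) :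
    (a3 ^ 2 / 4) * (a3 * (T + 2)) ≤ (T + 1 + a3) / 2 := by
  have hc : a3 ^ 3 * (T + 2) ≤ 1 * (T + 2) :=
    mul_le_mul_of_nonneg_right (arith_cube a3 h0 h1) (by linarith)
  nlinarith [hc]

lemma termC (r₁ r₂ r₃ : ℕ) (α₁ α₂ α₃ : ℝ) (hr₁ : 2 ≤ r₁) (hr₁₃ : r₃ + 2 ≤ r₁)
    (hα₁ : -1 < α₁) (hα₂ : 0 ≤ α₂) (hα₂' : α₂ < 1) (hα₃ : 0 < α₃) (hα₃' : α₃ < 1) :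
    |Fg ((r₁:ℝ) + α₁ - 1) (r₁ - 1) * Fg ((r₂:ℝ) + α₂) r₂ * Fg ((r₃:ℝ) + 1 + α₃) (r₃ + 2)|
      - |Fg ((r₁:ℝ) + α₁) r₁ * Fg ((r₂:ℝ) + α₂) r₂ * Fg ((r₃:ℝ) + α₃) (r₃ + 1)|
      ≤ (2:ℝ) ^ ((r₂:ℤ) - 1) / (r₁:ℝ) := by
  obtain ⟨s, rfl⟩ : ∃ s, r₁ = s + 2 := ⟨r₁ - 2, by omega⟩
  simp only [show s + 2 - 1 = s + 1 from rfl]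
  have hs₃ : r₃ ≤ s := by omega
  have hb₁ : (0:ℝ) < α₁ + 1 := by linarith
  have hb₂ : (0:ℝ) < α₂ + 1 := by linarith
  have hb₃ : (0:ℝ) < (α₃ - 1) + 1 := by linarith
  set A₁ : ℝ := ∏ k ∈ range (s + 1), (α₁ + 1 + k) with hA₁def
  set P₁ : ℝ := ∏ k ∈ range (s + 2), (α₁ + 1 + k) with hP₁def
  set A₂ : ℝ := ∏ k ∈ range r₂, (α₂ + 1 + k) with hA₂def
  set A₃ : ℝ := ∏ k ∈ range (r₃ + 2), ((α₃ - 1) + 1 + k) with hA₃def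
  set B₃ : ℝ := ∏ k ∈ range (r₃ + 1), ((α₃ - 1) + 1 + k) with hB₃def
  have e1' : Fg (((s + 2 : ℕ):ℝ) + α₁ - 1) (s + 1) = A₁ / ((s + 1).factorial : ℝ) := by
    have h := F_base α₁ hb₁ (s + 1)
    rw [show ((s + 2 : ℕ):ℝ) + α₁ - 1 = α₁ + ((s + 1 : ℕ) : ℝ) by push_cast; ring]
    exact h
  have e1 : Fg (((s + 2 : ℕ):ℝ) + α₁) (s + 2) = P₁ / ((s + 2).factorial : ℝ) := by
    have h := F_base α₁ hb₁ (s + 2)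
    rw [show ((s + 2 : ℕ):ℝ) + α₁ = α₁ + ((s + 2 : ℕ) : ℝ) by ring]
    exact h
  have e2 : Fg ((r₂:ℝ) + α₂) r₂ = A₂ / (r₂.factorial : ℝ) := by
    have h := F_base α₂ hb₂ r₂
    rw [show (r₂:ℝ) + α₂ = α₂ + (r₂ : ℝ) by ring]
    exact h
  have e3' : Fg ((r₃:ℝ) + 1 + α₃) (r₃ + 2) = A₃ / ((r₃ + 2).factorial : ℝ) := by
    have h := F_base (α₃ - 1) hb₃ (r₃ + 2)
    rw [show (r₃:ℝ) + 1 + α₃ = (α₃ - 1) + ((r₃ + 2 : ℕ) : ℝ) by push_cast; ring]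
    exact h
  have e3 : Fg ((r₃:ℝ) + α₃) (r₃ + 1) = B₃ / ((r₃ + 1).factorial : ℝ) := by
    have h := F_base (α₃ - 1) hb₃ (r₃ + 1)
    rw [show (r₃:ℝ) + α₃ = (α₃ - 1) + ((r₃ + 1 : ℕ) : ℝ) by push_cast; ring]
    exact h
  have hA₁pos : 0 < A₁ := Finset.prod_pos (fun k _ => by
    have : (0:ℝ) ≤ k := Nat.cast_nonneg k
    linarith)
  have hP₁pos : 0 < P₁ := Finset.prod_pos (fun k _ => by
    have : (0:ℝ) ≤ k := Nat.cast_nonneg k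
    linarith)
  have hA₂pos : 0 < A₂ := Finset.prod_pos (fun k _ => by
    have : (0:ℝ) ≤ k := Nat.cast_nonneg k
    linarith)
  have hA₃pos : 0 < A₃ := Finset.prod_pos (fun k _ => by
    have : (0:ℝ) ≤ k := Nat.cast_nonneg k
    linarith)
  have hB₃pos : 0 < B₃ := Finset.prod_pos (fun k _ => by
    have : (0:ℝ) ≤ k := Nat.cast_nonneg k
    linarith)
  have hP₁ : P₁ = A₁ * (((s + 2 : ℕ):ℝ) + α₁) := by
    calc P₁ = A₁ * (α₁ + 1 + ((s + 1 : ℕ):ℝ)) := prod_range_succ _ _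
      _ = A₁ * (((s + 2 : ℕ):ℝ) + α₁) := by push_cast; ring
  have hA₃B : A₃ = B₃ * ((r₃:ℝ) + 1 + α₃) := by
    calc A₃ = B₃ * ((α₃ - 1) + 1 + ((r₃ + 1 : ℕ):ℝ)) := prod_range_succ _ _
      _ = B₃ * ((r₃:ℝ) + 1 + α₃) := by push_cast; ring
  have hfac1 : ((s + 2).factorial : ℝ) = (((s + 2 : ℕ)):ℝ) * ((s + 1).factorial : ℝ) := by
    rw [Nat.factorial_succ (s + 1)]; push_cast; ring
  have hfac3 : ((r₃ + 2).factorial : ℝ) = ((r₃:ℝ) + 2) * ((r₃ + 1).factorial : ℝ) := by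
    rw [Nat.factorial_succ (r₃ + 1)]; push_cast; ring
  have hr₁pos : (0:ℝ) < ((s + 2 : ℕ):ℝ) := by positivity
  have hy1 : (0:ℝ) < (r₃:ℝ) + 1 + α₃ := by positivity
  have hr₃2 : (0:ℝ) < (r₃:ℝ) + 2 := by positivity
  have hxpos : (0:ℝ) < ((s + 2 : ℕ):ℝ) + α₁ := by push_cast; linarith [Nat.cast_nonneg (α := ℝ) s]
  set E : ℝ := A₁ * A₂ * A₃ / (((s + 1).factorial : ℝ) * (r₂.factorial : ℝ) * ((r₃ + 1).factorial : ℝ)) with hEdef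
  have hEpos : 0 < E := by positivity
  have hT' : |Fg (((s + 2 : ℕ):ℝ) + α₁ - 1) (s + 1) * Fg ((r₂:ℝ) + α₂) r₂ * Fg ((r₃:ℝ) + 1 + α₃) (r₃ + 2)|
      = E / ((r₃:ℝ) + 2) := by
    rw [e1', e2, e3', hEdef, hfac3]
    rw [abs_of_pos (by positivity)]
    field_simp
  have hT : |Fg (((s + 2 : ℕ):ℝ) + α₁) (s + 2) * Fg ((r₂:ℝ) + α₂) r₂ * Fg ((r₃:ℝ) + α₃) (r₃ + 1)|
      = E * (((s + 2 : ℕ):ℝ) + α₁) / (((s + 2 : ℕ):ℝ) * ((r₃:ℝ) + 1 + α₃)) := by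
    rw [e1, e2, e3, hEdef, hfac1, hP₁]
    rw [abs_of_pos (by positivity)]
    rw [hA₃B]
    field_simp
  rw [hT', hT]
  have hpow : (2:ℝ) ^ ((r₂:ℤ) - 1) = (2:ℝ) ^ r₂ / 2 := by
    rw [zpow_sub₀ (two_ne_zero), zpow_natCast, zpow_one]
  rcases le_or_gt (((s + 2 : ℕ):ℝ) * ((r₃:ℝ) + 1 + α₃)) ((((s + 2 : ℕ):ℝ) + α₁) * ((r₃:ℝ) + 2)) with hgood | hbad
  · have h1 : E / ((r₃:ℝ) + 2) ≤ E * (((s + 2 : ℕ):ℝ) + α₁) / (((s + 2 : ℕ):ℝ) * ((r₃:ℝ) + 1 + α₃)) := by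
      rw [div_le_div_iff₀ hr₃2 (by positivity)]
      calc E * (((s + 2 : ℕ):ℝ) * ((r₃:ℝ) + 1 + α₃))
          ≤ E * (((((s + 2 : ℕ)):ℝ) + α₁) * ((r₃:ℝ) + 2)) :=
            mul_le_mul_of_nonneg_left hgood hEpos.le
        _ = E * (((s + 2 : ℕ):ℝ) + α₁) * ((r₃:ℝ) + 2) := by ring
    have h2 : (0:ℝ) < (2:ℝ) ^ ((r₂:ℤ) - 1) / (((s + 2 : ℕ)):ℝ) := by positivity
    linarith
  · have hcast : ((s + 2 : ℕ):ℝ) = (s:ℝ) + 2 := by push_cast; ring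
    have hα₁neg : α₁ < 0 := by
      apply arith_neg ((s:ℝ) + 2) (r₃:ℝ) α₁ α₃ (by positivity) hα₃' (Nat.cast_nonneg r₃)
      rw [hcast] at hbad
      linarith
    -- product bounds
    have hA₁le : A₁ ≤ (α₁ + 1) * ((s + 1).factorial : ℝ) := by
      have hsplit : A₁ = (∏ k ∈ range s, (α₁ + 1 + ((k + 1 : ℕ):ℝ))) * (α₁ + 1 + ((0:ℕ):ℝ)) :=
        prod_range_succ' _ _
      have hinner : (∏ k ∈ range s, (α₁ + 1 + ((k + 1 : ℕ):ℝ))) ≤ ((s + 1).factorial : ℝ) := by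
        calc (∏ k ∈ range s, (α₁ + 1 + ((k + 1 : ℕ):ℝ)))
            = ∏ k ∈ range s, ((α₁ + 1) + 1 + (k:ℝ)) := by
              apply Finset.prod_congr rfl; intro k _; push_cast; ring
          _ ≤ ((s + 1).factorial : ℝ) := prod_le_fact (α₁ + 1) hb₁.le (by linarith) s
      have hpos0 : (0:ℝ) ≤ α₁ + 1 + ((0:ℕ):ℝ) := by push_cast; linarith
      calc A₁ = (∏ k ∈ range s, (α₁ + 1 + ((k + 1 : ℕ):ℝ))) * (α₁ + 1 + ((0:ℕ):ℝ)) := hsplit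
        _ ≤ ((s + 1).factorial : ℝ) * (α₁ + 1 + ((0:ℕ):ℝ)) :=
            mul_le_mul_of_nonneg_right hinner hpos0
        _ = (α₁ + 1) * ((s + 1).factorial : ℝ) := by push_cast; ring
    have hA₂le : A₂ ≤ (2:ℝ) ^ r₂ * (r₂.factorial : ℝ) := by
      calc A₂ ≤ ∏ k ∈ range r₂, (2 * ((k:ℝ) + 1)) := by
            apply Finset.prod_le_prod
            · intro k _; have : (0:ℝ) ≤ k := Nat.cast_nonneg k; positivity
            · intro k _; have : (0:ℝ) ≤ k := Nat.cast_nonneg k; linarith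
        _ = (2:ℝ) ^ r₂ * (r₂.factorial : ℝ) := by
            rw [Finset.prod_mul_distrib, Finset.prod_const, card_range, prod_range_cast_fact]
    have hA₃le : A₃ ≤ α₃ * (((r₃ + 2).factorial : ℝ)) := by
      have hsplit : A₃ = (∏ k ∈ range (r₃ + 1), ((α₃ - 1) + 1 + ((k + 1 : ℕ):ℝ))) * ((α₃ - 1) + 1 + ((0:ℕ):ℝ)) :=
        prod_range_succ' _ _
      have hinner : (∏ k ∈ range (r₃ + 1), ((α₃ - 1) + 1 + ((k + 1 : ℕ):ℝ)))
          ≤ ((r₃ + 2).factorial : ℝ) := by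
        calc (∏ k ∈ range (r₃ + 1), ((α₃ - 1) + 1 + ((k + 1 : ℕ):ℝ)))
            = ∏ k ∈ range (r₃ + 1), (α₃ + 1 + (k:ℝ)) := by
              apply Finset.prod_congr rfl; intro k _; push_cast; ring
          _ ≤ ((r₃ + 2).factorial : ℝ) := prod_le_fact α₃ hα₃.le hα₃'.le (r₃ + 1)
      have hpos0 : (0:ℝ) ≤ (α₃ - 1) + 1 + ((0:ℕ):ℝ) := by push_cast; linarith
      calc A₃ = (∏ k ∈ range (r₃ + 1), ((α₃ - 1) + 1 + ((k + 1 : ℕ):ℝ))) * ((α₃ - 1) + 1 + ((0:ℕ):ℝ)) := hsplit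
        _ ≤ ((r₃ + 2).factorial : ℝ) * ((α₃ - 1) + 1 + ((0:ℕ):ℝ)) :=
            mul_le_mul_of_nonneg_right hinner hpos0
        _ = α₃ * ((r₃ + 2).factorial : ℝ) := by push_cast; ring
    have hEle : E ≤ (α₁ + 1) * (2:ℝ) ^ r₂ * α₃ * ((r₃:ℝ) + 2) := by
      rw [hEdef, div_le_iff₀ (by positivity)]
      calc A₁ * A₂ * A₃
          ≤ ((α₁ + 1) * ((s + 1).factorial : ℝ)) * ((2:ℝ) ^ r₂ * (r₂.factorial : ℝ))
            * (α₃ * (((r₃ + 2).factorial : ℝ))) := by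
            apply mul_le_mul (mul_le_mul hA₁le hA₂le hA₂pos.le (by positivity)) hA₃le hA₃pos.le
            positivity
        _ = (α₁ + 1) * (2:ℝ) ^ r₂ * α₃ * ((r₃:ℝ) + 2)
            * (((s + 1).factorial : ℝ) * (r₂.factorial : ℝ) * ((r₃ + 1).factorial : ℝ)) := by
            rw [hfac3]; ring
    have hr₁₃' : (r₃:ℝ) + 2 ≤ (s:ℝ) + 2 := by
      have : (r₃:ℝ) ≤ (s:ℝ) := by exact_mod_cast hs₃
      linarith
    have hMle : ((s + 2 : ℕ):ℝ) * ((r₃:ℝ) + 1 + α₃) - (((s + 2 : ℕ):ℝ) + α₁) * ((r₃:ℝ) + 2)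
        ≤ ((r₃:ℝ) + 2) * (α₃ - 1 - α₁) := by
      rw [hcast]
      have := arith_Mle ((s:ℝ) + 2) (r₃:ℝ) α₁ α₃ hr₁₃' hα₃'.le
      linarith
    have hMpos : 0 < ((s + 2 : ℕ):ℝ) * ((r₃:ℝ) + 1 + α₃) - (((s + 2 : ℕ):ℝ) + α₁) * ((r₃:ℝ) + 2) := by
      linarith
    have hstep1 : (α₁ + 1) * (α₃ - 1 - α₁) ≤ α₃ ^ 2 / 4 := arith_amgm α₁ α₃
    have key : E * (((s + 2 : ℕ):ℝ) * ((r₃:ℝ) + 1 + α₃) - (((s + 2 : ℕ):ℝ) + α₁) * ((r₃:ℝ) + 2))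
        ≤ (2:ℝ) ^ r₂ * (((r₃:ℝ) + 2) * ((r₃:ℝ) + 1 + α₃)) / 2 := by
      have h1 : E * (((s + 2 : ℕ):ℝ) * ((r₃:ℝ) + 1 + α₃) - (((s + 2 : ℕ):ℝ) + α₁) * ((r₃:ℝ) + 2))
          ≤ ((α₁ + 1) * (2:ℝ) ^ r₂ * α₃ * ((r₃:ℝ) + 2)) * (((r₃:ℝ) + 2) * (α₃ - 1 - α₁)) := by
        apply mul_le_mul hEle hMle hMpos.le
        positivity
      have hq : ((α₁ + 1) * (α₃ - 1 - α₁)) * (α₃ * ((r₃:ℝ) + 2))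
          ≤ (α₃ ^ 2 / 4) * (α₃ * ((r₃:ℝ) + 2)) :=
        mul_le_mul_of_nonneg_right hstep1 (by positivity)
      have hq2 : (α₃ ^ 2 / 4) * (α₃ * ((r₃:ℝ) + 2)) ≤ ((r₃:ℝ) + 1 + α₃) / 2 :=
        arith_q2 α₃ (r₃:ℝ) hα₃.le hα₃'.le (Nat.cast_nonneg r₃)
      have h2 : ((α₁ + 1) * (2:ℝ) ^ r₂ * α₃ * ((r₃:ℝ) + 2)) * (((r₃:ℝ) + 2) * (α₃ - 1 - α₁))
          ≤ (2:ℝ) ^ r₂ * (((r₃:ℝ) + 2) * ((r₃:ℝ) + 1 + α₃)) / 2 := by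
        calc ((α₁ + 1) * (2:ℝ) ^ r₂ * α₃ * ((r₃:ℝ) + 2)) * (((r₃:ℝ) + 2) * (α₃ - 1 - α₁))
            = ((2:ℝ) ^ r₂ * ((r₃:ℝ) + 2)) * (((α₁ + 1) * (α₃ - 1 - α₁)) * (α₃ * ((r₃:ℝ) + 2))) := by
              ring
          _ ≤ ((2:ℝ) ^ r₂ * ((r₃:ℝ) + 2)) * (((r₃:ℝ) + 1 + α₃) / 2) :=
              mul_le_mul_of_nonneg_left (le_trans hq hq2) (by positivity)
          _ = (2:ℝ) ^ r₂ * (((r₃:ℝ) + 2) * ((r₃:ℝ) + 1 + α₃)) / 2 := by ring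
      linarith
    have heq : E / ((r₃:ℝ) + 2) - E * (((s + 2 : ℕ):ℝ) + α₁) / (((s + 2 : ℕ):ℝ) * ((r₃:ℝ) + 1 + α₃))
        = E * (((s + 2 : ℕ):ℝ) * ((r₃:ℝ) + 1 + α₃) - (((s + 2 : ℕ):ℝ) + α₁) * ((r₃:ℝ) + 2))
          / (((r₃:ℝ) + 2) * (((s + 2 : ℕ):ℝ) * ((r₃:ℝ) + 1 + α₃))) := by
      field_simp
    have heq2 : ((2:ℝ) ^ r₂ * (((r₃:ℝ) + 2) * ((r₃:ℝ) + 1 + α₃)) / 2)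
          / (((r₃:ℝ) + 2) * (((s + 2 : ℕ):ℝ) * ((r₃:ℝ) + 1 + α₃)))
        = (2:ℝ) ^ ((r₂:ℤ) - 1) / (((s + 2 : ℕ)):ℝ) := by
      rw [hpow]
      field_simp
    rw [heq, ← heq2]
    exact div_le_div_of_nonneg_right key (by positivity) |>.trans_eq rfl

end Delta3Helpers

theorem delta3_lower_bound (n : ℕ) (hn : 4 ≤ n) (r₁ r₂ r₃ : ℕ)
    (hr : r₁ + r₂ + r₃ = n - 1) (α₁ α₂ α₃ : ℝ)
    (hα₁ : -1 < α₁) (hα₁' : α₁ < 1)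
    (hα₂ : 0 ≤ α₂) (hα₂' : α₂ < 1) (hα₃ : 0 ≤ α₃) (hα₃' : α₃ < 1)
    (hs : α₁ + α₂ + α₃ = 1)
    (h12 : (r₁:ℝ) - 1 + α₁ ≥ (r₂:ℝ) + α₂) (h13 : (r₁:ℝ) - 1 + α₁ ≥ (r₃:ℝ) + 1 + α₃) :
    S3 n (r₁, r₂, r₃) (((r₁:ℝ) + α₁)/n, ((r₂:ℝ) + α₂)/n, ((r₃:ℝ) + α₃)/n)
      - S3 n (r₁ - 1, r₂, r₃ + 1)
          (((r₁:ℝ) - 1 + α₁)/n, ((r₂:ℝ) + α₂)/n, ((r₃:ℝ) + 1 + α₃)/n)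
      ≥ -((2:ℝ) ^ ((r₂:ℤ) - 1) / (r₁:ℝ)) := by
  have hn0 : (n:ℝ) ≠ 0 := Nat.cast_ne_zero.2 (by omega)
  have hnr : n = r₁ + r₂ + r₃ + 1 := by omega
  have hr₁₃ : r₃ + 2 ≤ r₁ := by
    have h1 : (r₃:ℝ) + 1 < (r₁:ℝ) := by linarith
    have h2 : r₃ + 1 < r₁ := by exact_mod_cast h1
    omega
  have hr₁2 : 2 ≤ r₁ := by omega
  have hr₁pos : (0:ℝ) < (r₁:ℝ) := by positivity
  have hnR : (n:ℝ) = (r₁:ℝ) + r₂ + r₃ + 1 := by exact_mod_cast congrArg (Nat.cast (R := ℝ)) hnr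
  have hBpos : (0:ℝ) < (2:ℝ) ^ ((r₂:ℤ) - 1) / (r₁:ℝ) := by positivity
  have hlag : ∀ (a b c : ℝ) (i j k : ℕ), lagPoly n (a / n, b / n, c / n) (i, j, k)
      = Fg a i * Fg b j * Fg c k := by
    intro a b c i j k
    simp only [lagPoly, Fg]
    rw [show (n:ℝ) * (a / n) = a by field_simp, show (n:ℝ) * (b / n) = b by field_simp,
        show (n:ℝ) * (c / n) = c by field_simp]
  simp only [S3, hlag]
  rw [show (r₁ - 1) + 1 = r₁ from by omega]
  rw [show (r₁:ℝ) - 1 + α₁ = ((r₁:ℝ) + α₁) - 1 from by ring,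
      show (r₃:ℝ) + 1 + α₃ = ((r₃:ℝ) + α₃) + 1 from by ring]
  set x : ℝ := (r₁:ℝ) + α₁ with hxdef
  set y : ℝ := (r₃:ℝ) + α₃ with hydef
  set w : ℝ := (r₂:ℝ) + α₂ with hwdef
  have hxpos : 0 < x := by rw [hxdef]; linarith
  have hy1 : 0 < y + 1 := by rw [hydef]; positivity
  have hx2 : y + 2 ≤ x := by rw [hxdef, hydef]; linarith
  rcases eq_or_lt_of_le hα₃ with h0 | hα₃pos
  · -- α₃ = 0 : all λ' terms vanish
    have hzero : ∀ i₂ ∈ Finset.range (r₂ + 1), ∀ i₁ ∈ Finset.range r₁,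
        |Fg (x - 1) i₁ * Fg w i₂ * Fg (y + 1) (n - i₁ - i₂)| = 0 := by
      intro i₂ hi₂ i₁ hi₁
      simp only [Finset.mem_range] at hi₂ hi₁
      have hge : r₃ + 2 ≤ n - i₁ - i₂ := by omega
      have hle : i₁ + i₂ ≤ n := by omega
      have hG0 : Real.Gamma (y + 1 - (n - i₁ - i₂ : ℕ) + 1) = 0 := by
        have hc : y + 1 - ((n - i₁ - i₂ : ℕ):ℝ) + 1 = -(((n - i₁ - i₂ - r₃ - 2 : ℕ)):ℝ) := by
          rw [hydef, ← h0]
          have c1 : ((n - i₁ - i₂ : ℕ):ℝ) = ((n:ℕ):ℝ) - i₁ - i₂ := by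
            push_cast [Nat.cast_sub (by omega : i₁ ≤ n - i₂), Nat.cast_sub (by omega : i₂ ≤ n)]
            have : ((n - i₁ - i₂ : ℕ)) + i₁ + i₂ = n := by omega
            have := congrArg (Nat.cast (R := ℝ)) this
            push_cast at this
            linarith
          have c2 : ((n - i₁ - i₂ - r₃ - 2 : ℕ):ℝ) = ((n:ℕ):ℝ) - i₁ - i₂ - r₃ - 2 := by
            have : ((n - i₁ - i₂ - r₃ - 2 : ℕ)) + i₁ + i₂ + r₃ + 2 = n := by omega
            have := congrArg (Nat.cast (R := ℝ)) this
            push_cast at this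
            linarith
          rw [c1, c2]
          ring
        rw [hc]
        exact Real.Gamma_neg_nat_eq_zero _
      have : Fg (y + 1) (n - i₁ - i₂) = 0 := by
        unfold Fg
        rw [hG0, mul_zero, div_zero]
      rw [this, mul_zero, abs_zero]
    have hz : (∑ i₂ ∈ Finset.range (r₂ + 1), ∑ i₁ ∈ Finset.range r₁,
        |Fg (x - 1) i₁ * Fg w i₂ * Fg (y + 1) (n - i₁ - i₂)|) = 0 := by
      apply Finset.sum_eq_zero
      intro i₂ hi₂
      exact Finset.sum_eq_zero (hzero i₂ hi₂)
    rw [hz, sub_zero]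
    have hnn : (0:ℝ) ≤ ∑ i₂ ∈ Finset.range (r₂ + 1), ∑ i₁ ∈ Finset.range (r₁ + 1),
        |Fg x i₁ * Fg w i₂ * Fg y (n - i₁ - i₂)| := by
      apply Finset.sum_nonneg; intro i₂ _
      apply Finset.sum_nonneg; intro i₁ _
      exact abs_nonneg _
    linarith
  · -- α₃ > 0
    have hGy : ∀ m : ℕ, Real.Gamma (y + 1 - m) ≠ 0 := by
      intro m
      apply Real.Gamma_ne_zero
      intro k hk
      rw [hydef] at hk
      have h1 : α₃ = (m:ℝ) - r₃ - 1 - k := by linarith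
      have h2 : ((r₃:ℕ):ℝ) + 1 + (k:ℝ) < m := by rw [h1] at hα₃pos; linarith
      have h3 : (m:ℝ) < ((r₃:ℕ):ℝ) + 2 + (k:ℝ) := by rw [h1] at hα₃'; linarith
      have h2' : r₃ + 1 + k < m := by exact_mod_cast h2
      have h3' : m < r₃ + 2 + k := by exact_mod_cast h3
      omega
    have hrow : ∀ i₂ ∈ Finset.range (r₂ + 1),
        (if i₂ = r₂ then -((2:ℝ) ^ ((r₂:ℤ) - 1) / (r₁:ℝ)) else 0)
        ≤ (∑ i₁ ∈ Finset.range (r₁ + 1), |Fg x i₁ * Fg w i₂ * Fg y (n - i₁ - i₂)|)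
          - (∑ i₁ ∈ Finset.range r₁, |Fg (x - 1) i₁ * Fg w i₂ * Fg (y + 1) (n - i₁ - i₂)|) := by
      intro i₂ hi₂
      simp only [Finset.mem_range] at hi₂
      rcases eq_or_ne i₂ r₂ with heq | hne
      · -- the i₂ = r₂ row : shifted comparison
        rw [heq]
        rw [if_pos rfl]
        rw [Finset.sum_range_succ' (fun i₁ => |Fg x i₁ * Fg w r₂ * Fg y (n - i₁ - r₂)|) r₁]
        have hkey : ∀ i₁ ∈ Finset.range r₁,
            |Fg (x - 1) i₁ * Fg w r₂ * Fg (y + 1) (n - i₁ - r₂)|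
              - |Fg x (i₁ + 1) * Fg w r₂ * Fg y (n - (i₁ + 1) - r₂)|
            ≤ (if i₁ = r₁ - 1 then (2:ℝ) ^ ((r₂:ℤ) - 1) / (r₁:ℝ) else 0) := by
          intro i₁ hi₁
          simp only [Finset.mem_range] at hi₁
          rcases eq_or_ne i₁ (r₁ - 1) with heq₁ | hne₁
          · rw [heq₁]
            rw [if_pos rfl]
            have hC := termC r₁ r₂ r₃ α₁ α₂ α₃ hr₁2 hr₁₃ hα₁ hα₂ hα₂' hα₃pos hα₃'
            rw [show (r₁:ℝ) + α₁ - 1 = x - 1 from by rw [hxdef],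
                show (r₃:ℝ) + 1 + α₃ = y + 1 from by rw [hydef]; ring,
                show (r₃:ℝ) + α₃ = y from by rw [hydef],
                show (r₂:ℝ) + α₂ = w from by rw [hwdef]] at hC
            rw [show (r₁ - 1) + 1 = r₁ from by omega,
                show n - (r₁ - 1) - r₂ = r₃ + 2 from by omega,
                show n - r₁ - r₂ = r₃ + 1 from by omega]
            rw [show (r₁:ℝ) + α₁ = x from by rw [hxdef]] at hC
            linarith
          · simp only [if_neg hne₁]
            have hi₁' : i₁ ≤ r₁ - 2 := by omega
            obtain ⟨j, hj⟩ : ∃ j, n - (i₁ + 1) - r₂ = j := ⟨n - (i₁ + 1) - r₂, rfl⟩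
            have hj1 : n - i₁ - r₂ = j + 1 := by omega
            rw [hj, hj1]
            have hjcast : (j:ℝ) + 1 = (r₁:ℝ) + r₃ + 1 - i₁ := by
              have : j + 1 + i₁ + r₂ = n := by omega
              have := congrArg (Nat.cast (R := ℝ)) this
              push_cast at this
              linarith
            have hineq : ((i₁:ℝ) + 1) * (y + 1) ≤ x * ((j:ℝ) + 1) := by
              have h1 : (i₁:ℝ) + 1 ≤ x := by
                have : (i₁:ℝ) ≤ (r₁:ℝ) - 2 := by
                  have : (i₁:ℝ) ≤ ((r₁ - 2 : ℕ):ℝ) := by exact_mod_cast hi₁'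
                  have hc : ((r₁ - 2 : ℕ):ℝ) = (r₁:ℝ) - 2 := by
                    have : (r₁ - 2) + 2 = r₁ := by omega
                    have := congrArg (Nat.cast (R := ℝ)) this
                    push_cast at this
                    linarith
                  linarith [hc ▸ this]
                rw [hxdef]; linarith
              have h2 : y + 1 ≤ (j:ℝ) + 1 := by
                rw [hydef, hjcast]
                have : (i₁:ℝ) ≤ (r₁:ℝ) - 2 := by
                  have h' : (i₁:ℝ) ≤ ((r₁ - 2 : ℕ):ℝ) := by exact_mod_cast hi₁'
                  have hc : ((r₁ - 2 : ℕ):ℝ) = (r₁:ℝ) - 2 := by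
                    have : (r₁ - 2) + 2 = r₁ := by omega
                    have := congrArg (Nat.cast (R := ℝ)) this
                    push_cast at this
                    linarith
                  linarith
                linarith
              have h3 : (0:ℝ) ≤ y + 1 := hy1.le
              have h4 : (0:ℝ) ≤ x := hxpos.le
              exact mul_le_mul h1 h2 h3 h4
            have := termB x y w i₁ j r₂ hxpos hy1 hineq
            linarith
        have hsum := Finset.sum_le_sum hkey
        rw [Finset.sum_sub_distrib] at hsum
        rw [Finset.sum_ite_eq' (Finset.range r₁) (r₁ - 1)
          (fun _ => (2:ℝ) ^ ((r₂:ℤ) - 1) / (r₁:ℝ))] at hsum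
        rw [if_pos (Finset.mem_range.2 (by omega : r₁ - 1 < r₁))] at hsum
        have h0 : (0:ℝ) ≤ |Fg x 0 * Fg w r₂ * Fg y (n - 0 - r₂)| := abs_nonneg _
        linarith
      · -- rows i₂ < r₂ : termwise comparison
        simp only [if_neg hne]
        have hi₂' : i₂ < r₂ := by omega
        rw [Finset.sum_range_succ]
        have hterm : ∀ i₁ ∈ Finset.range r₁,
            |Fg (x - 1) i₁ * Fg w i₂ * Fg (y + 1) (n - i₁ - i₂)|
            ≤ |Fg x i₁ * Fg w i₂ * Fg y (n - i₁ - i₂)| := by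
          intro i₁ hi₁
          simp only [Finset.mem_range] at hi₁
          have hge : r₃ + 3 ≤ n - i₁ - i₂ := by omega
          set i₃ := n - i₁ - i₂ with hi₃def
          have hi₃cast : (i₃:ℝ) = (r₁:ℝ) + r₂ + r₃ + 1 - i₁ - i₂ := by
            have : i₃ + i₁ + i₂ = n := by omega
            have := congrArg (Nat.cast (R := ℝ)) this
            push_cast at this
            linarith
          have hi₁cast : (i₁:ℝ) ≤ (r₁:ℝ) - 1 := by
            have h' : (i₁:ℝ) ≤ ((r₁ - 1 : ℕ):ℝ) := by
              exact_mod_cast (by omega : i₁ ≤ r₁ - 1)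
            have hc : ((r₁ - 1 : ℕ):ℝ) = (r₁:ℝ) - 1 := by
              have : (r₁ - 1) + 1 = r₁ := by omega
              have := congrArg (Nat.cast (R := ℝ)) this
              push_cast at this
              linarith
            linarith
          have hi₂cast : (i₂:ℝ) ≤ (r₂:ℝ) - 1 := by
            have h' : (i₂:ℝ) + 1 ≤ (r₂:ℝ) := by exact_mod_cast hi₂'
            linarith
          have hxi : 0 < x - i₁ := by rw [hxdef]; linarith
          have hi₃ : y + 2 ≤ (i₃:ℝ) := by
            rw [hydef, hi₃cast]; linarith
          have hGy' : Real.Gamma (y + 1 - i₃) ≠ 0 := hGy i₃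
          have hAB : x - i₁ ≤ (i₃:ℝ) - 1 - y := by
            rw [hxdef, hydef, hi₃cast]; linarith
          have hineq : (x - i₁) * (y + 1) ≤ x * ((i₃:ℝ) - 1 - y) := by
            calc (x - i₁) * (y + 1) ≤ ((i₃:ℝ) - 1 - y) * (y + 1) :=
                  mul_le_mul_of_nonneg_right hAB hy1.le
              _ ≤ ((i₃:ℝ) - 1 - y) * x := by
                  apply mul_le_mul_of_nonneg_left (by linarith) (by linarith)
              _ = x * ((i₃:ℝ) - 1 - y) := by ring
          exact termA x y w i₁ i₂ i₃ hxpos hy1 hxi hi₃ hGy' hineq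
        have hsum := Finset.sum_le_sum hterm
        have h0 : (0:ℝ) ≤ |Fg x r₁ * Fg w i₂ * Fg y (n - r₁ - i₂)| := abs_nonneg _
        linarith
    have h := Finset.sum_le_sum hrow
    rw [Finset.sum_ite_eq' (Finset.range (r₂ + 1)) r₂
      (fun _ => -((2:ℝ) ^ ((r₂:ℤ) - 1) / (r₁:ℝ)))] at h
    rw [if_pos (Finset.mem_range.2 (by omega : r₂ < r₂ + 1))] at h
    rw [Finset.sum_sub_distrib] at h
    exact h
end

section
/- Under the stated setup, δ₆ = S₆((r₁, r₂, r₃); λ) − S₆((r₁−1, r₂, r₃+1); λ') satisfies δ₆ ≥ Σ_{i₂=r₂+1}^{n−r₃−1} a_{i₂} · C(r₁−1+α₁, n−r₃−i₂−1) · C(r₃+α₃, r₃+1). -/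
open Finset

/-- Generalized binomial coefficient `C(a,b) = Γ(a+1)/(Γ(b+1)·Γ(a−b+1))`. -/
noncomputable def genBinom (a b : ℝ) : ℝ :=
  Real.Gamma (a + 1) / (Real.Gamma (b + 1) * Real.Gamma (a - b + 1))

/-- `S₆((ρ₁,ρ₂,ρ₃); μ) = Σ_{i₂=ρ₂+1}^{n−ρ₃−1} Σ_{i₁=0}^{n−ρ₃−1−i₂} |l_{(i₁, i₂, n−i₁−i₂)}(μ)|`. -/
noncomputable def S6 (n : ℕ) (ρ : ℕ × ℕ × ℕ) (mu : ℝ × ℝ × ℝ) : ℝ :=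
  ∑ i₂ ∈ Finset.Icc (ρ.2.1 + 1) (n - ρ.2.2 - 1), ∑ i₁ ∈ Finset.range (n - ρ.2.2 - i₂),
    |lagPoly n mu (i₁, i₂, n - i₁ - i₂)|

/- ### Auxiliary lemmas -/

lemma pascal (a b : ℝ) (hb : b ≠ 0) (hΓb : Real.Gamma b ≠ 0)
    (ha : a ≠ 0) (hab : a - b ≠ 0) (hΓab : Real.Gamma (a - b) ≠ 0) :
    genBinom a b = genBinom (a-1) b + genBinom (a-1) (b-1) := by
  unfold genBinom
  have h1 : Real.Gamma (a+1) = a * Real.Gamma a := Real.Gamma_add_one ha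
  have h2 : Real.Gamma (b+1) = b * Real.Gamma b := Real.Gamma_add_one hb
  have h3 : Real.Gamma (a-b+1) = (a-b) * Real.Gamma (a-b) := Real.Gamma_add_one hab
  have h4 : (a-1) - b + 1 = a - b := by ring
  have h5 : (a-1) - (b-1) + 1 = a - b + 1 := by ring
  have h6 : (b-1) + 1 = b := by ring
  have h7 : (a-1) + 1 = a := by ring
  rw [h4, h5, h6, h7, h1, h2, h3]
  field_simp
  ring

lemma gamma_alt_sign (α : ℝ) (h0 : 0 < α) (h1 : α < 1) (t : ℕ) :
    0 < (-1)^t * Real.Gamma (α - t) := by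
  induction t with
  | zero => simpa using Real.Gamma_pos_of_pos h0
  | succ t ih =>
      have hne : α - (t+1 : ℕ) ≠ 0 := by
        have h1' : (1:ℝ) ≤ ((t:ℝ) + 1) := by
          have : (0:ℝ) ≤ (t:ℝ) := Nat.cast_nonneg t
          linarith
        push_cast
        nlinarith
      have hrec : Real.Gamma (α - t) = (α - ((t:ℝ)+1)) * Real.Gamma (α - ((t:ℝ)+1)) := by
        have h := Real.Gamma_add_one (by push_cast at hne ⊢; exact hne)
        rw [show α - ((t:ℝ)+1) + 1 = α - t by ring] at h
        exact h
      have hc : α - ((t:ℝ)+1) < 0 := by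
        have : (0:ℝ) ≤ (t:ℝ) := Nat.cast_nonneg t
        linarith
      have hcast : ((t+1 : ℕ):ℝ) = (t:ℝ) + 1 := by push_cast; ring
      rw [hcast]
      rcases Nat.even_or_odd t with he | ho
      · rw [Even.neg_one_pow he] at ih
        rw [Odd.neg_one_pow (Even.add_one he)]
        nlinarith [ih, hrec, hc]
      · rw [Odd.neg_one_pow ho] at ih
        rw [Even.neg_one_pow (Odd.add_one ho)]
        nlinarith [ih, hrec, hc]

lemma genBinom_alt_sign (α : ℝ) (h0 : 0 < α) (h1 : α < 1) (r j : ℕ) (hj : r + 1 ≤ j) :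
    0 < (-1)^(j - (r+1)) * genBinom ((r:ℝ) + α) j := by
  set t := j - (r+1) with ht
  have hjc : (j:ℝ) = (r:ℝ) + 1 + (t:ℝ) := by
    have : j = r + 1 + t := by omega
    rw [this]; push_cast; ring
  have harg : (r:ℝ) + α - (j:ℝ) + 1 = α - t := by rw [hjc]; ring
  unfold genBinom
  rw [harg]
  have hN : 0 < Real.Gamma ((r:ℝ) + α + 1) := Real.Gamma_pos_of_pos (by positivity)
  have hD : 0 < Real.Gamma ((j:ℝ) + 1) := Real.Gamma_pos_of_pos (by positivity)
  have hG := gamma_alt_sign α h0 h1 t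
  rcases Nat.even_or_odd t with he | ho
  · rw [Even.neg_one_pow he] at hG ⊢
    rw [one_mul] at hG ⊢
    positivity
  · rw [Odd.neg_one_pow ho] at hG ⊢
    have hGneg : Real.Gamma (α - t) < 0 := by linarith
    have : Real.Gamma ((r:ℝ)+α+1) / (Real.Gamma ((j:ℝ)+1) * Real.Gamma (α - t)) < 0 :=
      div_neg_of_pos_of_neg hN (mul_neg_of_pos_of_neg hD hGneg)
    linarith

lemma abs_eq_sign_mul (p x : ℝ) (hp : |p| = 1) (h : 0 < p * x) : |x| = p * x := by
  have h2 := abs_of_pos h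
  rw [abs_mul, hp, one_mul] at h2
  exact h2

lemma neg_one_pow_abs (t : ℕ) : |((-1:ℝ))^t| = 1 := by
  rw [abs_pow, abs_neg, abs_one, one_pow]

lemma B_step (α : ℝ) (h0 : 0 < α) (h1 : α < 1) (r j : ℕ) (hj : r + 2 ≤ j) :
    |genBinom ((r:ℝ) + 1 + α) j| =
      |genBinom ((r:ℝ) + α) ((j-1 : ℕ):ℝ)| - |genBinom ((r:ℝ) + α) j| := by
  set t := j - (r+2) with ht
  have h1' : |genBinom ((r:ℝ) + 1 + α) j| = (-1)^t * genBinom ((r:ℝ) + 1 + α) j := by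
    have := genBinom_alt_sign α h0 h1 (r+1) j (by omega)
    rw [show ((r+1:ℕ):ℝ) = (r:ℝ)+1 by push_cast; ring] at this
    have he : j - (r+1+1) = t := by omega
    rw [he] at this
    exact abs_eq_sign_mul _ _ (neg_one_pow_abs t) this
  have h2' : |genBinom ((r:ℝ) + α) ((j-1:ℕ):ℝ)| = (-1)^t * genBinom ((r:ℝ) + α) ((j-1:ℕ):ℝ) := by
    have := genBinom_alt_sign α h0 h1 r (j-1) (by omega)
    have he : (j-1) - (r+1) = t := by omega
    rw [he] at this
    exact abs_eq_sign_mul _ _ (neg_one_pow_abs t) this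
  have h3' : |genBinom ((r:ℝ) + α) j| = (-1)^(t+1) * genBinom ((r:ℝ) + α) j := by
    have := genBinom_alt_sign α h0 h1 r j (by omega)
    have he : j - (r+1) = t+1 := by omega
    rw [he] at this
    exact abs_eq_sign_mul _ _ (neg_one_pow_abs (t+1)) this
  have hcast : ((j-1:ℕ):ℝ) = (j:ℝ) - 1 := by
    have : (1:ℕ) ≤ j := by omega
    push_cast [Nat.cast_sub this]
    ring
  have hpas : genBinom ((r:ℝ) + 1 + α) j
      = genBinom ((r:ℝ) + α) j + genBinom ((r:ℝ) + α) ((j:ℝ) - 1) := by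
    have hjpos : (0:ℝ) < (j:ℝ) := by exact_mod_cast Nat.pos_of_ne_zero (by omega)
    have hb : (j:ℝ) ≠ 0 := ne_of_gt hjpos
    have hΓb : Real.Gamma (j:ℝ) ≠ 0 := ne_of_gt (Real.Gamma_pos_of_pos hjpos)
    have ha : (r:ℝ) + 1 + α ≠ 0 := by positivity
    have habv : (r:ℝ) + 1 + α - j = α - ((t:ℝ)+1) := by
      have : j = r + 2 + t := by omega
      rw [this]; push_cast; ring
    have hab : (r:ℝ) + 1 + α - j ≠ 0 := by
      rw [habv]
      have : (0:ℝ) ≤ (t:ℝ) := Nat.cast_nonneg t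
      intro hc; nlinarith
    have hΓab : Real.Gamma ((r:ℝ) + 1 + α - j) ≠ 0 := by
      rw [habv]
      have := gamma_alt_sign α h0 h1 (t+1)
      push_cast at this
      intro hc; rw [hc, mul_zero] at this; exact lt_irrefl 0 this
    have := pascal ((r:ℝ)+1+α) j hb hΓb ha hab hΓab
    rw [show (r:ℝ)+1+α-1 = (r:ℝ)+α by ring] at this
    exact this
  rw [h1', h2', h3', hcast, hpas, pow_succ]
  ring

lemma B_zero (r j : ℕ) (hj : r + 1 ≤ j) : genBinom (r:ℝ) j = 0 := by
  unfold genBinom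
  have : (r:ℝ) - j + 1 = -((j - (r+1) : ℕ):ℝ) := by
    rw [Nat.cast_sub hj]; push_cast; ring
  rw [this, Real.Gamma_neg_nat_eq_zero, mul_zero, div_zero]

lemma genBinom_pos (a : ℝ) (k : ℕ) (ha : 0 < a + 1) (hak : 0 < a - k + 1) :
    0 < genBinom a k :=
  div_pos (Real.Gamma_pos_of_pos ha)
    (mul_pos (Real.Gamma_pos_of_pos (by positivity)) (Real.Gamma_pos_of_pos hak))

lemma lag_eq (n : ℕ) (hn : (n:ℝ) ≠ 0) (x y z : ℝ) (i : ℕ × ℕ × ℕ) :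
    lagPoly n (x/n, y/n, z/n) i = genBinom x i.1 * genBinom y i.2.1 * genBinom z i.2.2 := by
  unfold lagPoly genBinom
  have h : ∀ w : ℝ, (n:ℝ) * (w/n) = w := fun w => by field_simp
  simp only [h]
  rw [Real.Gamma_nat_eq_factorial, Real.Gamma_nat_eq_factorial, Real.Gamma_nat_eq_factorial]

lemma lag_eq' (n : ℕ) (hn : (n:ℝ) ≠ 0) (x y z : ℝ) (i₁ i₂ i₃ : ℕ) :
    lagPoly n (x/n, y/n, z/n) (i₁, i₂, i₃) = genBinom x i₁ * genBinom y i₂ * genBinom z i₃ :=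
  lag_eq n hn x y z (i₁, i₂, i₃)

lemma S6_eq (n ρ₁ ρ₂ ρ₃ : ℕ) (mu : ℝ × ℝ × ℝ) :
    S6 n (ρ₁, ρ₂, ρ₃) mu
      = ∑ i₂ ∈ Finset.Icc (ρ₂ + 1) (n - ρ₃ - 1), ∑ i₁ ∈ Finset.range (n - ρ₃ - i₂),
          |lagPoly n mu (i₁, i₂, n - i₁ - i₂)| := rfl

set_option maxHeartbeats 1000000 in
theorem delta6_lower_bound (n : ℕ) (hn : 4 ≤ n) (r₁ r₂ r₃ : ℕ)
    (hr : r₁ + r₂ + r₃ = n - 1) (α₁ α₂ α₃ : ℝ)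
    (hα₁ : -1 < α₁) (hα₁' : α₁ < 1)
    (hα₂ : 0 ≤ α₂) (hα₂' : α₂ < 1) (hα₃ : 0 ≤ α₃) (hα₃' : α₃ < 1)
    (hs : α₁ + α₂ + α₃ = 1)
    (h12 : (r₁:ℝ) - 1 + α₁ ≥ (r₂:ℝ) + α₂) (h13 : (r₁:ℝ) - 1 + α₁ ≥ (r₃:ℝ) + 1 + α₃) :
    S6 n (r₁, r₂, r₃) (((r₁:ℝ) + α₁)/n, ((r₂:ℝ) + α₂)/n, ((r₃:ℝ) + α₃)/n)
      - S6 n (r₁ - 1, r₂, r₃ + 1)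
          (((r₁:ℝ) - 1 + α₁)/n, ((r₂:ℝ) + α₂)/n, ((r₃:ℝ) + 1 + α₃)/n)
      ≥ ∑ i₂ ∈ Finset.Icc (r₂ + 1) (n - r₃ - 1),
          |Real.Gamma ((r₂:ℝ) + α₂ + 1) / (i₂.factorial * Real.Gamma ((r₂:ℝ) + α₂ + 1 - i₂))|
            * genBinom ((r₁:ℝ) - 1 + α₁) ((n:ℝ) - r₃ - i₂ - 1)
            * genBinom ((r₃:ℝ) + α₃) ((r₃:ℝ) + 1) := by
  -- basic numeric facts
  have hr₁ : r₃ + 2 ≤ r₁ := by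
    have h' : (r₃:ℝ) + 1 < (r₁:ℝ) := by linarith
    have : r₃ + 1 < r₁ := by exact_mod_cast h'
    omega
  have hn1 : n = r₁ + r₂ + r₃ + 1 := by omega
  subst hn1
  set N := r₁ + r₂ + r₃ + 1 with hN
  have hNne : (N:ℝ) ≠ 0 := by
    have : 0 < N := by omega
    exact_mod_cast Nat.pos_iff_ne_zero.mp this
  have hb1 : (r₁:ℝ) - 1 + α₁ = ((r₁:ℝ) + α₁) - 1 := by ring
  rw [hb1]
  have ha1pos : 0 < (r₁:ℝ) + α₁ := by
    have : (2:ℝ) ≤ (r₁:ℝ) := by exact_mod_cast (by omega : 2 ≤ r₁)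
    linarith
  rw [S6_eq, S6_eq]
  -- second sum extended to the larger index set
  have hext : ∑ i₂ ∈ Finset.Icc (r₂ + 1) (N - (r₃+1) - 1),
        ∑ i₁ ∈ Finset.range (N - (r₃+1) - i₂),
          |lagPoly N (((r₁:ℝ) + α₁ - 1)/N, ((r₂:ℝ) + α₂)/N, ((r₃:ℝ) + 1 + α₃)/N)
            (i₁, i₂, N - i₁ - i₂)|
      = ∑ i₂ ∈ Finset.Icc (r₂ + 1) (N - r₃ - 1),
        ∑ i₁ ∈ Finset.range (N - (r₃+1) - i₂),
          |lagPoly N (((r₁:ℝ) + α₁ - 1)/N, ((r₂:ℝ) + α₂)/N, ((r₃:ℝ) + 1 + α₃)/N)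
            (i₁, i₂, N - i₁ - i₂)| := by
    apply Finset.sum_subset
    · intro x hx
      simp only [Finset.mem_Icc] at hx ⊢
      omega
    · intro x hx hnx
      simp only [Finset.mem_Icc] at hx hnx
      have hx2 : N - (r₃+1) - x = 0 := by omega
      rw [hx2]
      simp
  rw [hext]
  rw [ge_iff_le, ← Finset.sum_sub_distrib]
  apply Finset.sum_le_sum
  intro i₂ hi₂
  simp only [Finset.mem_Icc] at hi₂
  obtain ⟨hlo, hhi'⟩ := hi₂
  have hhi : i₂ ≤ r₁ + r₂ := by omega
  set M := r₁ + r₂ - i₂ with hM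
  have hMle : M ≤ r₁ - 1 := by omega
  have e1 : N - r₃ - i₂ = M + 1 := by omega
  have e2 : N - (r₃ + 1) - i₂ = M := by omega
  rw [e1, e2]
  set c := |genBinom ((r₂:ℝ) + α₂) (i₂:ℝ)| with hc
  have hc0 : 0 ≤ c := abs_nonneg _
  -- positivity facts
  have hPpos : ∀ k : ℕ, k ≤ r₁ - 1 → 0 < genBinom ((r₁:ℝ) + α₁ - 1) (k:ℝ) := by
    intro k hk
    apply genBinom_pos
    · linarith
    · have : (k:ℝ) + 1 ≤ (r₁:ℝ) := by exact_mod_cast (by omega : k + 1 ≤ r₁)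
      linarith
  have hApos : ∀ k : ℕ, k ≤ r₁ - 1 → 0 < genBinom ((r₁:ℝ) + α₁) (k:ℝ) := by
    intro k hk
    apply genBinom_pos
    · linarith
    · have : (k:ℝ) + 1 ≤ (r₁:ℝ) := by exact_mod_cast (by omega : k + 1 ≤ r₁)
      linarith
  -- Pascal on the first factor
  have hA : ∀ k : ℕ, k ≤ r₁ - 1 →
      |genBinom ((r₁:ℝ) + α₁) (k:ℝ)| = genBinom ((r₁:ℝ) + α₁ - 1) (k:ℝ)
        + (if k = 0 then 0 else genBinom ((r₁:ℝ) + α₁ - 1) ((k-1 : ℕ):ℝ)) := by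
    intro k hk
    rw [abs_of_pos (hApos k hk)]
    rcases Nat.eq_zero_or_pos k with h0 | hpos
    · subst h0
      rw [if_pos rfl, add_zero, Nat.cast_zero]
      unfold genBinom
      have hg1 : Real.Gamma ((r₁:ℝ) + α₁ + 1) ≠ 0 :=
        ne_of_gt (Real.Gamma_pos_of_pos (by linarith))
      have hg2 : Real.Gamma ((r₁:ℝ) + α₁ - 1 + 1) ≠ 0 := by
        rw [show (r₁:ℝ) + α₁ - 1 + 1 = (r₁:ℝ) + α₁ by ring]
        exact ne_of_gt (Real.Gamma_pos_of_pos ha1pos)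
      rw [show (0:ℝ) + 1 = 1 by ring, Real.Gamma_one]
      rw [show (r₁:ℝ) + α₁ - (0:ℝ) + 1 = (r₁:ℝ) + α₁ + 1 by ring,
        show (r₁:ℝ) + α₁ - 1 - (0:ℝ) + 1 = (r₁:ℝ) + α₁ - 1 + 1 by ring]
      rw [one_mul, one_mul, div_self hg1, div_self hg2]
    · have hkR : (0:ℝ) < (k:ℝ) := by exact_mod_cast hpos
      have hkle : (k:ℝ) + 1 ≤ (r₁:ℝ) := by exact_mod_cast (by omega : k + 1 ≤ r₁)
      have hab : (r₁:ℝ) + α₁ - (k:ℝ) ≠ 0 := by intro h; nlinarith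
      have hΓab : Real.Gamma ((r₁:ℝ) + α₁ - (k:ℝ)) ≠ 0 := by
        apply ne_of_gt; apply Real.Gamma_pos_of_pos; nlinarith
      have := pascal ((r₁:ℝ) + α₁) (k:ℝ) (ne_of_gt hkR)
        (ne_of_gt (Real.Gamma_pos_of_pos hkR)) (ne_of_gt ha1pos) hab hΓab
      rw [this, if_neg (by omega)]
      congr 2
      rw [Nat.cast_sub hpos]
      push_cast; ring
  -- the B-side identity for the shifted parameter
  have hB' : ∀ i₁ : ℕ, i₁ < M →
      |genBinom ((r₃:ℝ) + 1 + α₃) ((N - i₁ - i₂ : ℕ):ℝ)|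
        = |genBinom ((r₃:ℝ) + α₃) ((N - (i₁+1) - i₂ : ℕ):ℝ)|
          - |genBinom ((r₃:ℝ) + α₃) ((N - i₁ - i₂ : ℕ):ℝ)| := by
    intro i₁ hi₁
    have hj : r₃ + 2 ≤ N - i₁ - i₂ := by omega
    rcases eq_or_lt_of_le hα₃ with hz | hpos3
    · have hza : (r₃:ℝ) + α₃ = ((r₃:ℕ):ℝ) := by rw [← hz, add_zero]
      have hza1 : (r₃:ℝ) + 1 + α₃ = (((r₃+1 : ℕ)):ℝ) := by rw [← hz]; push_cast; ring
      rw [hza, hza1]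
      rw [B_zero (r₃+1) (N - i₁ - i₂) (by omega)]
      rw [B_zero r₃ (N - (i₁+1) - i₂) (by omega)]
      rw [B_zero r₃ (N - i₁ - i₂) (by omega)]
      simp
    · have hB := B_step α₃ hpos3 hα₃' r₃ (N - i₁ - i₂) hj
      rw [show (N - i₁ - i₂) - 1 = N - (i₁+1) - i₂ by omega] at hB
      exact hB
  -- first sum decomposition
  have hSum1 : ∑ i₁ ∈ Finset.range (M+1),
        |lagPoly N (((r₁:ℝ) + α₁)/N, ((r₂:ℝ) + α₂)/N, ((r₃:ℝ) + α₃)/N)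
          (i₁, i₂, N - i₁ - i₂)|
      = (∑ i₁ ∈ Finset.range (M+1),
          genBinom ((r₁:ℝ) + α₁ - 1) (i₁:ℝ) * c
            * |genBinom ((r₃:ℝ) + α₃) ((N - i₁ - i₂ : ℕ):ℝ)|)
        + ∑ i₁ ∈ Finset.range M,
          genBinom ((r₁:ℝ) + α₁ - 1) (i₁:ℝ) * c
            * |genBinom ((r₃:ℝ) + α₃) ((N - (i₁+1) - i₂ : ℕ):ℝ)| := by
    have hstep : ∀ i₁ ∈ Finset.range (M+1),
        |lagPoly N (((r₁:ℝ) + α₁)/N, ((r₂:ℝ) + α₂)/N, ((r₃:ℝ) + α₃)/N)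
          (i₁, i₂, N - i₁ - i₂)|
          = genBinom ((r₁:ℝ) + α₁ - 1) (i₁:ℝ) * c
              * |genBinom ((r₃:ℝ) + α₃) ((N - i₁ - i₂ : ℕ):ℝ)|
            + (if i₁ = 0 then 0 else genBinom ((r₁:ℝ) + α₁ - 1) ((i₁-1 : ℕ):ℝ))
              * c * |genBinom ((r₃:ℝ) + α₃) ((N - i₁ - i₂ : ℕ):ℝ)| := by
      intro i₁ hi₁
      simp only [Finset.mem_range] at hi₁
      rw [lag_eq' N hNne, abs_mul, abs_mul]
      rw [hA i₁ (by omega)]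
      ring
    rw [Finset.sum_congr rfl hstep, Finset.sum_add_distrib]
    congr 1
    rw [Finset.sum_range_succ']
    rw [if_pos rfl, zero_mul, zero_mul, add_zero]
    apply Finset.sum_congr rfl
    intro k hk
    rw [if_neg (by omega)]
    norm_num
  -- second sum decomposition
  have hSum2 : ∑ i₁ ∈ Finset.range M,
        |lagPoly N (((r₁:ℝ) + α₁ - 1)/N, ((r₂:ℝ) + α₂)/N, ((r₃:ℝ) + 1 + α₃)/N)
          (i₁, i₂, N - i₁ - i₂)|
      = (∑ i₁ ∈ Finset.range M,
          genBinom ((r₁:ℝ) + α₁ - 1) (i₁:ℝ) * c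
            * |genBinom ((r₃:ℝ) + α₃) ((N - (i₁+1) - i₂ : ℕ):ℝ)|)
        - ∑ i₁ ∈ Finset.range M,
          genBinom ((r₁:ℝ) + α₁ - 1) (i₁:ℝ) * c
            * |genBinom ((r₃:ℝ) + α₃) ((N - i₁ - i₂ : ℕ):ℝ)| := by
    rw [← Finset.sum_sub_distrib]
    apply Finset.sum_congr rfl
    intro i₁ hi₁
    simp only [Finset.mem_range] at hi₁
    rw [lag_eq' N hNne, abs_mul, abs_mul]
    rw [abs_of_pos (hPpos i₁ (by omega)), hB' i₁ hi₁]
    ring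
  rw [hSum1, hSum2]
  -- the final estimate
  have hnonneg : ∀ i₁ ∈ Finset.range (M+1),
      0 ≤ genBinom ((r₁:ℝ) + α₁ - 1) (i₁:ℝ) * c
        * |genBinom ((r₃:ℝ) + α₃) ((N - i₁ - i₂ : ℕ):ℝ)| := by
    intro i₁ hi₁
    simp only [Finset.mem_range] at hi₁
    have := hPpos i₁ (by omega)
    positivity
  have hnonneg2 : 0 ≤ ∑ i₁ ∈ Finset.range M,
      genBinom ((r₁:ℝ) + α₁ - 1) (i₁:ℝ) * c
        * |genBinom ((r₃:ℝ) + α₃) ((N - i₁ - i₂ : ℕ):ℝ)| := by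
    apply Finset.sum_nonneg
    intro i₁ hi₁
    simp only [Finset.mem_range] at hi₁
    exact hnonneg i₁ (by simp only [Finset.mem_range]; omega)
  have hsingle : genBinom ((r₁:ℝ) + α₁ - 1) (M:ℝ) * c
        * |genBinom ((r₃:ℝ) + α₃) ((N - M - i₂ : ℕ):ℝ)|
      ≤ ∑ i₁ ∈ Finset.range (M+1),
        genBinom ((r₁:ℝ) + α₁ - 1) (i₁:ℝ) * c
          * |genBinom ((r₃:ℝ) + α₃) ((N - i₁ - i₂ : ℕ):ℝ)| :=
    Finset.single_le_sum hnonneg (by simp)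
  -- identify the left-hand side with the M-th term
  have hterm : |Real.Gamma ((r₂:ℝ) + α₂ + 1)
          / (i₂.factorial * Real.Gamma ((r₂:ℝ) + α₂ + 1 - i₂))|
        * genBinom ((r₁:ℝ) + α₁ - 1) ((N:ℝ) - r₃ - i₂ - 1)
        * genBinom ((r₃:ℝ) + α₃) ((r₃:ℝ) + 1)
      = genBinom ((r₁:ℝ) + α₁ - 1) (M:ℝ) * c
        * |genBinom ((r₃:ℝ) + α₃) ((N - M - i₂ : ℕ):ℝ)| := by
    have hc2 : |Real.Gamma ((r₂:ℝ) + α₂ + 1)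
        / (i₂.factorial * Real.Gamma ((r₂:ℝ) + α₂ + 1 - i₂))| = c := by
      have hgb : genBinom ((r₂:ℝ)+α₂) (i₂:ℝ)
          = Real.Gamma ((r₂:ℝ)+α₂+1)
            / (i₂.factorial * Real.Gamma ((r₂:ℝ)+α₂+1-(i₂:ℝ))) := by
        unfold genBinom
        rw [Real.Gamma_nat_eq_factorial,
          show (r₂:ℝ)+α₂ - (i₂:ℝ) + 1 = (r₂:ℝ)+α₂+1-(i₂:ℝ) by ring]
      rw [hc, hgb]
    have hMcast : (N:ℝ) - r₃ - i₂ - 1 = (M:ℝ) := by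
      rw [hM, hN]
      rw [Nat.cast_sub hhi]
      push_cast; ring
    have hNM : N - M - i₂ = r₃ + 1 := by omega
    have hr3cast : ((r₃ + 1 : ℕ):ℝ) = (r₃:ℝ) + 1 := by push_cast; ring
    have habs : |genBinom ((r₃:ℝ) + α₃) (((r₃ + 1 : ℕ)):ℝ)|
        = genBinom ((r₃:ℝ) + α₃) ((r₃:ℝ) + 1) := by
      rcases eq_or_lt_of_le hα₃ with hz | hpos3
      · have hza : (r₃:ℝ) + α₃ = ((r₃:ℕ):ℝ) := by rw [← hz, add_zero]
        rw [hza, B_zero r₃ (r₃+1) (by omega), abs_zero, ← hr3cast,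
          B_zero r₃ (r₃+1) (by omega)]
      · have h := genBinom_alt_sign α₃ hpos3 hα₃' r₃ (r₃+1) (le_refl _)
        rw [Nat.sub_self, pow_zero, one_mul] at h
        rw [abs_of_pos h, hr3cast]
    rw [hc2, hMcast, hNM, habs]
    ring
  rw [hterm]
  calc genBinom ((r₁:ℝ) + α₁ - 1) (M:ℝ) * c
        * |genBinom ((r₃:ℝ) + α₃) ((N - M - i₂ : ℕ):ℝ)|
      ≤ ∑ i₁ ∈ Finset.range (M+1),
          genBinom ((r₁:ℝ) + α₁ - 1) (i₁:ℝ) * c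
            * |genBinom ((r₃:ℝ) + α₃) ((N - i₁ - i₂ : ℕ):ℝ)| := hsingle
    _ ≤ _ := by linarith
end
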